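/- arXiv:1007.3020 — 6 statements merged into one kernel-verified Lean document; each statement's English description precedes it below -/
import Mathlib

section
/- For the Weierstrass prime factor W(z,p) and any integer p ≥ 1, one has log|W(z,p)| ≤ A_p·|z|^p for all complex z with |z| ≥ 1/3, where A_p = 3e(2 + log p). -/
/-- Weierstrass prime factor of order `p ≥ 1`:
`W(z,p) = (1-z) * exp (∑_{k=1}^p z^k/k)`. -/
noncomputable def Wfac (z : ℂ) (p : ℕ) : ℂ :=
  (1 - z) * Complex.exp (∑ k ∈ Finset.Icc 1 p, z ^ k / (k : ℂ))

open Finset in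
lemma wfac_norm_log (z : ℂ) (p : ℕ) (hz1 : z ≠ 1) :
    Real.log ‖Wfac z p‖ =
      Real.log ‖1 - z‖ + (∑ k ∈ Finset.Icc 1 p, z ^ k / (k : ℂ)).re := by
  have hne : (1 : ℂ) - z ≠ 0 := sub_ne_zero.mpr (Ne.symm hz1)
  rw [Wfac, norm_mul, Real.log_mul (norm_ne_zero_iff.mpr hne)
      (norm_ne_zero_iff.mpr (Complex.exp_ne_zero _)),
    Complex.norm_exp, Real.log_exp]

lemma norm_term (z : ℂ) (k : ℕ) : ‖z ^ k / (k : ℂ)‖ = ‖z‖ ^ k / (k : ℝ) := by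
  rw [norm_div, norm_pow, Complex.norm_natCast]

open Finset in
lemma crude (z : ℂ) (p : ℕ) :
    Real.log ‖Wfac z p‖ ≤ Real.log (1 + ‖z‖) + ∑ k ∈ Finset.Icc 1 p, ‖z‖ ^ k / k := by
  have hsum0 : (0:ℝ) ≤ ∑ k ∈ Finset.Icc 1 p, ‖z‖ ^ k / k := by
    refine Finset.sum_nonneg fun k _ => by positivity
  have hlog0 : (0:ℝ) ≤ Real.log (1 + ‖z‖) :=
    Real.log_nonneg (by linarith [norm_nonneg z])
  by_cases hz1 : z = 1
  · subst hz1
    simp only [Wfac, sub_self, zero_mul, norm_zero, Real.log_zero]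
    linarith
  · rw [wfac_norm_log z p hz1]
    refine add_le_add ?_ ?_
    · refine Real.log_le_log (norm_pos_iff.mpr (sub_ne_zero.mpr (Ne.symm hz1))) ?_
      calc ‖(1:ℂ) - z‖ ≤ ‖(1:ℂ)‖ + ‖z‖ := norm_sub_le _ _
        _ = 1 + ‖z‖ := by rw [norm_one]
    · rw [Complex.re_sum]
      refine Finset.sum_le_sum fun k _ => ?_
      calc (z ^ k / (k : ℂ)).re ≤ ‖z ^ k / (k : ℂ)‖ := Complex.re_le_norm _
        _ = ‖z ^ k / (k : ℂ)‖ := rfl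
        _ = ‖z‖ ^ k / k := norm_term z k

open Finset in
lemma tailBound (p : ℕ) (z : ℂ) (hz : ‖z‖ < 1) :
    Real.log ‖Wfac z p‖ ≤ ‖z‖ ^ (p + 1) / (p + 1) * (1 - ‖z‖)⁻¹ := by
  have hz1 : z ≠ 1 := by
    intro h; rw [h] at hz; simp at hz
  have hne : (1 : ℂ) - z ≠ 0 := sub_ne_zero.mpr (Ne.symm hz1)
  set f : ℕ → ℂ := fun n => z ^ n / (n : ℂ) with hf
  have hS : HasSum f (-Complex.log (1 - z)) := Complex.hasSum_taylorSeries_neg_log hz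
  have hrange : ∑ i ∈ Finset.range (p + 1), f i = ∑ k ∈ Finset.Icc 1 p, z ^ k / (k : ℂ) := by
    have : Finset.range (p + 1) = insert 0 (Finset.Icc 1 p) := by
      ext x
      simp only [Finset.mem_range, Finset.mem_insert, Finset.mem_Icc]
      omega
    rw [this, Finset.sum_insert (by simp)]
    simp [hf]
  set S := ∑ k ∈ Finset.Icc 1 p, z ^ k / (k : ℂ) with hSdef
  have hT : HasSum (fun n => f (n + (p + 1))) (-Complex.log (1 - z) - S) := by
    rw [← hrange]
    exact (hasSum_nat_add_iff' (p + 1)).mpr hS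
  have hbound : ∀ n : ℕ, ‖f (n + (p + 1))‖ ≤ ‖z‖ ^ (p + 1) / (p + 1) * ‖z‖ ^ n := by
    intro n
    rw [norm_term]
    have h1 : ‖z‖ ^ (n + (p + 1)) = ‖z‖ ^ (p + 1) * ‖z‖ ^ n := by
      rw [← pow_add]; ring_nf
    rw [h1]
    rw [div_le_iff₀ (by positivity)]
    have : ‖z‖ ^ (p + 1) / (p + 1) * ‖z‖ ^ n * (n + (p + 1) : ℕ) =
        ‖z‖ ^ (p + 1) * ‖z‖ ^ n * ((n + (p + 1) : ℕ) / (p + 1)) := by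
      ring
    rw [this]
    have hge : (1:ℝ) ≤ ((n + (p + 1) : ℕ) : ℝ) / (p + 1) := by
      rw [le_div_iff₀ (by positivity)]
      push_cast; linarith
    nlinarith [pow_nonneg (norm_nonneg z) (p+1), pow_nonneg (norm_nonneg z) n,
      mul_nonneg (pow_nonneg (norm_nonneg z) (p+1)) (pow_nonneg (norm_nonneg z) n)]
  have hg : HasSum (fun n : ℕ => ‖z‖ ^ (p + 1) / (p + 1) * ‖z‖ ^ n)
      (‖z‖ ^ (p + 1) / (p + 1) * (1 - ‖z‖)⁻¹) :=
    (hasSum_geometric_of_lt_one (norm_nonneg z) hz).mul_left _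
  have hnorm : ‖-Complex.log (1 - z) - S‖ ≤ ‖z‖ ^ (p + 1) / (p + 1) * (1 - ‖z‖)⁻¹ := by
    rw [← hT.tsum_eq]
    exact tsum_of_norm_bounded hg hbound
  rw [wfac_norm_log z p hz1]
  have hre : Real.log ‖1 - z‖ = (Complex.log (1 - z)).re := by
    rw [Complex.log_re]
  rw [hre]
  calc (Complex.log (1 - z)).re + S.re = -((-Complex.log (1 - z) - S).re) := by
        simp [Complex.sub_re, Complex.neg_re]; ring
    _ ≤ ‖-Complex.log (1 - z) - S‖ := by
        refine neg_le_of_neg_le ?_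
        calc -‖-Complex.log (1 - z) - S‖ ≤ -|(-Complex.log (1 - z) - S).re| := by
              exact neg_le_neg (Complex.abs_re_le_norm _)
          _ ≤ (-Complex.log (1 - z) - S).re := neg_abs_le _
    _ ≤ _ := hnorm

theorem stmt1 (p : ℕ) (hp : 1 ≤ p) (z : ℂ) (hz : 1 / 3 ≤ ‖z‖) :
    Real.log ‖Wfac z p‖ ≤ 3 * Real.exp 1 * (2 + Real.log p) * ‖z‖ ^ p := by
  have hr0 : (0:ℝ) ≤ ‖z‖ := norm_nonneg z
  have hp0 : (0:ℝ) < p := by exact_mod_cast hp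
  have hlogp : (0:ℝ) ≤ Real.log p := Real.log_nonneg (by exact_mod_cast hp)
  have hE1 : (1:ℝ) ≤ Real.exp 1 := by
    have := Real.add_one_le_exp (1:ℝ); linarith
  have hharm : ∑ k ∈ Finset.Icc 1 p, (k:ℝ)⁻¹ ≤ 1 + Real.log p := by
    have h1 : ((harmonic p : ℚ) : ℝ) = ∑ k ∈ Finset.Icc 1 p, (k:ℝ)⁻¹ := by
      rw [harmonic_eq_sum_Icc]; push_cast; rfl
    rw [← h1]; exact harmonic_le_one_add_log p
  by_cases hc : 1 ≤ ‖z‖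
  · -- case ‖z‖ ≥ 1 : crude bound
    have hrp : ‖z‖ ≤ ‖z‖ ^ p := le_self_pow₀ hc (by omega)
    have h1 : Real.log (1 + ‖z‖) ≤ ‖z‖ ^ p := by
      calc Real.log (1 + ‖z‖) ≤ (1 + ‖z‖) - 1 :=
            Real.log_le_sub_one_of_pos (by linarith)
        _ = ‖z‖ := by ring
        _ ≤ ‖z‖ ^ p := hrp
    have h2 : ∑ k ∈ Finset.Icc 1 p, ‖z‖ ^ k / k ≤ ‖z‖ ^ p * (1 + Real.log p) := by
      calc ∑ k ∈ Finset.Icc 1 p, ‖z‖ ^ k / k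
          ≤ ∑ k ∈ Finset.Icc 1 p, ‖z‖ ^ p * (k:ℝ)⁻¹ := by
            refine Finset.sum_le_sum fun k hk => ?_
            rw [Finset.mem_Icc] at hk
            rw [div_eq_mul_inv]
            have hk1 : (1:ℝ) ≤ (k:ℝ) := by exact_mod_cast hk.1
            have hki : (k:ℝ)⁻¹ ≤ 1 := by
              rw [inv_le_one_iff₀]; right; exact hk1
            have hki0 : (0:ℝ) ≤ (k:ℝ)⁻¹ := by positivity
            have hpk : ‖z‖ ^ k ≤ ‖z‖ ^ p := pow_le_pow_right₀ hc hk.2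
            nlinarith [pow_nonneg hr0 k]
        _ = ‖z‖ ^ p * ∑ k ∈ Finset.Icc 1 p, (k:ℝ)⁻¹ := by rw [Finset.mul_sum]
        _ ≤ ‖z‖ ^ p * (1 + Real.log p) :=
            mul_le_mul_of_nonneg_left hharm (pow_nonneg hr0 p)
    calc Real.log ‖Wfac z p‖ ≤ Real.log (1 + ‖z‖) + ∑ k ∈ Finset.Icc 1 p, ‖z‖ ^ k / k :=
          crude z p
      _ ≤ ‖z‖ ^ p + ‖z‖ ^ p * (1 + Real.log p) := add_le_add h1 h2
      _ = (2 + Real.log p) * ‖z‖ ^ p := by ring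
      _ ≤ 3 * Real.exp 1 * (2 + Real.log p) * ‖z‖ ^ p := by
          have hz0 : (0:ℝ) ≤ ‖z‖ ^ p := pow_nonneg hr0 p
          nlinarith [mul_nonneg (by linarith : (0:ℝ) ≤ 2 + Real.log p) hz0]
  · push_neg at hc
    by_cases hc2 : ‖z‖ ≤ (p : ℝ) / (p + 1)
    · -- small: tail bound gives ≤ ‖z‖^p
      have h1 : (1:ℝ) ≤ (p + 1) * (1 - ‖z‖) := by
        have : (1:ℝ) - ‖z‖ ≥ 1 - (p : ℝ) / (p + 1) := by linarith
        have h2 : (1:ℝ) - (p : ℝ) / (p + 1) = 1 / (p + 1) := by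
          field_simp; ring
        rw [h2] at this
        calc (1:ℝ) = (p + 1) * (1 / (p + 1)) := by field_simp
          _ ≤ (p + 1) * (1 - ‖z‖) :=
              mul_le_mul_of_nonneg_left this (by positivity)
      calc Real.log ‖Wfac z p‖ ≤ ‖z‖ ^ (p + 1) / (p + 1) * (1 - ‖z‖)⁻¹ :=
            tailBound p z hc
        _ = ‖z‖ ^ (p + 1) / ((p + 1) * (1 - ‖z‖)) := by
            rw [← div_eq_mul_inv, div_div]
        _ ≤ ‖z‖ ^ (p + 1) / 1 :=
            div_le_div_of_nonneg_left (pow_nonneg hr0 _) one_pos h1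
        _ = ‖z‖ ^ p * ‖z‖ := by rw [div_one, pow_succ]
        _ ≤ ‖z‖ ^ p * 1 := by
            have hz0 : (0:ℝ) ≤ ‖z‖ ^ p := pow_nonneg hr0 p
            nlinarith
        _ ≤ 3 * Real.exp 1 * (2 + Real.log p) * ‖z‖ ^ p := by
            have hz0 : (0:ℝ) ≤ ‖z‖ ^ p := pow_nonneg hr0 p
            nlinarith [mul_nonneg (by linarith : (0:ℝ) ≤ 2 + Real.log p) hz0]
    · -- ‖z‖ > p/(p+1) : ‖z‖^p ≥ 1/e, crude bound suffices
      push_neg at hc2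
      have hkey : (1:ℝ) ≤ Real.exp 1 * ‖z‖ ^ p := by
        have h1 : (1 + 1 / (p:ℝ)) ≤ Real.exp (1 / p) := by
          have := Real.add_one_le_exp (1 / (p:ℝ)); linarith
        have h2 : (1 + 1 / (p:ℝ)) ^ p ≤ Real.exp 1 := by
          calc (1 + 1 / (p:ℝ)) ^ p ≤ Real.exp (1 / p) ^ p :=
                pow_le_pow_left₀ (by positivity) h1 p
            _ = Real.exp 1 := by
                rw [← Real.exp_nat_mul]
                congr 1
                field_simp
        have h3 : ((p:ℝ) / (p + 1)) ^ p ≤ ‖z‖ ^ p :=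
          pow_le_pow_left₀ (by positivity) hc2.le p
        have h4 : ((p:ℝ) / (p + 1)) = (1 + 1 / (p:ℝ))⁻¹ := by
          field_simp
        have h5 : (1:ℝ) ≤ Real.exp 1 * ((p:ℝ) / (p + 1)) ^ p := by
          rw [h4, inv_pow, ← div_eq_mul_inv, le_div_iff₀ (by positivity), one_mul]
          exact h2
        calc (1:ℝ) ≤ Real.exp 1 * ((p:ℝ) / (p + 1)) ^ p := h5
          _ ≤ Real.exp 1 * ‖z‖ ^ p :=
              mul_le_mul_of_nonneg_left h3 (Real.exp_pos 1).le
      have hcrude : Real.log ‖Wfac z p‖ ≤ 2 + Real.log p := by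
        calc Real.log ‖Wfac z p‖
            ≤ Real.log (1 + ‖z‖) + ∑ k ∈ Finset.Icc 1 p, ‖z‖ ^ k / k := crude z p
          _ ≤ 1 + (1 + Real.log p) := by
              refine add_le_add ?_ ?_
              · calc Real.log (1 + ‖z‖) ≤ (1 + ‖z‖) - 1 :=
                    Real.log_le_sub_one_of_pos (by linarith)
                  _ = ‖z‖ := by ring
                  _ ≤ 1 := hc.le
              · calc ∑ k ∈ Finset.Icc 1 p, ‖z‖ ^ k / k
                    ≤ ∑ k ∈ Finset.Icc 1 p, (k:ℝ)⁻¹ := by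
                      refine Finset.sum_le_sum fun k hk => ?_
                      rw [Finset.mem_Icc] at hk
                      rw [div_eq_mul_inv]
                      have : ‖z‖ ^ k ≤ 1 := pow_le_one₀ hr0 hc.le
                      have hk0 : (0:ℝ) < (k:ℝ)⁻¹ := by
                        have : (0:ℝ) < (k:ℝ) := by exact_mod_cast hk.1
                        positivity
                      nlinarith
                  _ ≤ 1 + Real.log p := hharm
          _ = 2 + Real.log p := by ring
      calc Real.log ‖Wfac z p‖ ≤ 2 + Real.log p := hcrude
        _ = (2 + Real.log p) * 1 := by ring
        _ ≤ (2 + Real.log p) * (3 * (Real.exp 1 * ‖z‖ ^ p)) :=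
            mul_le_mul_of_nonneg_left (by linarith) (by linarith)
        _ = 3 * Real.exp 1 * (2 + Real.log p) * ‖z‖ ^ p := by ring
end

section
/- Let w and ω be points of the open upper half-plane with ω = |ω|e^{iτ}, and let N_p(w,ω) be the Nevanlinna prime factor of order p ≥ 1. If |w/ω| ≥ 1/3, then log|N_p(w,ω)| ≤ C_p·|sin τ|·|w/ω|^p for a constant C_p depending only on p (one may take C_p = 2·∑_{k=1}^p 3^{p-k} ≤ 3^p). -/
/-- Nevanlinna prime factor of order `p`: `N_p(w,ω) = W(w/ω,p) / W(w/conj ω,p)`. -/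
noncomputable def Nfac (w ω : ℂ) (p : ℕ) : ℂ :=
  Wfac (w / ω) p / Wfac (w / (starRingEnd ℂ ω)) p

open Complex Finset

lemma im_pow_le (z : ℂ) (k : ℕ) : |(z ^ (k+1)).im| ≤ (k+1 : ℝ) * ‖z‖ ^ k * |z.im| := by
  induction k with
  | zero => simp
  | succ n ih =>
    have h1 : z ^ (n+2) = z ^ (n+1) * z := by ring
    rw [h1, Complex.mul_im]
    calc |(z ^ (n+1)).re * z.im + (z ^ (n+1)).im * z.re|
        ≤ |(z ^ (n+1)).re| * |z.im| + |(z ^ (n+1)).im| * |z.re| := by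
          refine (abs_add_le _ _).trans ?_
          rw [abs_mul, abs_mul]
      _ ≤ ‖z‖ ^ (n+1) * |z.im| + ((n+1 : ℝ) * ‖z‖ ^ n * |z.im|) * ‖z‖ := by
          gcongr
          · calc |(z ^ (n+1)).re| ≤ ‖z ^ (n+1)‖ := Complex.abs_re_le_norm _
              _ = ‖z‖ ^ (n+1) := norm_pow _ _
          · exact Complex.abs_re_le_norm z
      _ = (n+1+1 : ℝ) * ‖z‖ ^ (n+1) * |z.im| := by ring
      _ = ((n+1 : ℕ) + 1 : ℝ) * ‖z‖ ^ (n+1) * |z.im| := by push_cast; ring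

lemma term_bound (w ω : ℂ) (hω0 : ω ≠ 0) (m : ℕ) :
    ‖(w/ω)^(m+1) - (w/(starRingEnd ℂ ω))^(m+1)‖
      ≤ 2 * (m+1 : ℝ) * ‖w/ω‖^(m+1) * |Real.sin ω.arg| := by
  have hωa : (0:ℝ) < ‖ω‖ := norm_pos_iff.mpr hω0
  have hωc : (starRingEnd ℂ ω) ≠ 0 := by simpa using hω0
  have hpow : ω ^ (m+1) ≠ 0 := pow_ne_zero _ hω0
  have e : (w/ω)^(m+1) - (w/(starRingEnd ℂ ω))^(m+1)
      = w^(m+1) * ((starRingEnd ℂ (ω^(m+1))) - ω^(m+1))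
        / (ω^(m+1) * (starRingEnd ℂ (ω^(m+1)))) := by
    rw [div_pow, div_pow, ← map_pow]
    have hpc : starRingEnd ℂ (ω^(m+1)) ≠ 0 := by simpa using hpow
    field_simp
  have hconj : ‖starRingEnd ℂ (ω^(m+1)) - ω^(m+1)‖ = 2 * |(ω^(m+1)).im| := by
    have h2 : ∀ u : ℂ, starRingEnd ℂ u - u = Complex.I * (((-2 : ℝ) * u.im : ℝ) : ℂ) := by
      intro u
      apply Complex.ext <;> simp <;> ring
    rw [h2]
    rw [norm_mul, Complex.norm_I, one_mul, Complex.norm_real, Real.norm_eq_abs, abs_mul]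
    norm_num
  have hsin : |Real.sin ω.arg| = |ω.im| / ‖ω‖ := by
    rw [Complex.sin_arg, abs_div, abs_of_pos hωa]
  rw [norm_div, hsin]
  calc ‖(w/ω)^(m+1) - (w/(starRingEnd ℂ ω))^(m+1)‖
      = (‖w‖)^(m+1) * (2 * |(ω^(m+1)).im|)
          / ((‖ω‖)^(m+1) * (‖ω‖)^(m+1)) := by
        rw [e, norm_div, norm_mul, hconj, norm_mul, RCLike.norm_conj, norm_pow, norm_pow]
    _ ≤ (‖w‖)^(m+1) * (2 * ((m+1 : ℝ) * ‖ω‖ ^ m * |ω.im|))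
          / ((‖ω‖)^(m+1) * (‖ω‖)^(m+1)) := by
        gcongr
        exact im_pow_le ω m
    _ = 2 * (m+1 : ℝ) * (‖w‖ / ‖ω‖)^(m+1) * (|ω.im| / ‖ω‖) := by
        have hωn : ‖ω‖ ≠ 0 := hωa.ne'
        rw [div_pow]
        field_simp
        ring
lemma norm_one_sub_div_le (w ω : ℂ) (hw : 0 < w.im) (hω : 0 < ω.im) :
    ‖1 - w / ω‖ ≤ ‖1 - w / (starRingEnd ℂ ω)‖ := by
  have hω0 : ω ≠ 0 := fun hc => by simp [hc] at hω
  have hωc : (starRingEnd ℂ ω) ≠ 0 := by simpa using hω0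
  have e1 : (1 : ℂ) - w / ω = (ω - w) / ω := by field_simp
  have e2 : (1 : ℂ) - w / (starRingEnd ℂ ω) = ((starRingEnd ℂ ω) - w) / (starRingEnd ℂ ω) := by
    field_simp
  rw [e1, e2, norm_div, norm_div, RCLike.norm_conj]
  have key : ‖ω - w‖ ≤ ‖(starRingEnd ℂ ω) - w‖ := by
    rw [Complex.norm_def, Complex.norm_def]
    apply Real.sqrt_le_sqrt
    simp only [Complex.normSq_apply, Complex.sub_re, Complex.sub_im, Complex.conj_re,
      Complex.conj_im]
    nlinarith [hw, hω]
  gcongr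


theorem stmt4 (p : ℕ) (hp : 1 ≤ p) (w ω : ℂ) (hw : 0 < w.im) (hω : 0 < ω.im)
    (h : 1 / 3 ≤ ‖w / ω‖) :
    Real.log ‖Nfac w ω p‖ ≤
      (2 * ∑ k ∈ Finset.Icc 1 p, (3 : ℝ) ^ (p - k)) * |Real.sin ω.arg| * ‖w / ω‖ ^ p := by

  have hω0 : ω ≠ 0 := fun hc => by simp [hc] at hω
  have hωc : (starRingEnd ℂ ω) ≠ 0 := by simpa using hω0
  set r := ‖w / ω‖ with hrdef
  have hr0 : (0:ℝ) ≤ r := norm_nonneg _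
  set z₁ := w / ω with hz₁def
  set z₂ := w / (starRingEnd ℂ ω) with hz₂def
  have RHSnn : 0 ≤ (2 * ∑ k ∈ Finset.Icc 1 p, (3:ℝ)^(p-k)) * |Real.sin ω.arg| * r ^ p := by
    have : 0 ≤ ∑ k ∈ Finset.Icc 1 p, (3:ℝ)^(p-k) :=
      Finset.sum_nonneg fun k _ => by positivity
    positivity
  have hz2 : (1:ℂ) - z₂ ≠ 0 := by
    intro hc
    have h1 : z₂ = 1 := by linear_combination -hc
    have h2 : w = starRingEnd ℂ ω := by
      rw [hz₂def] at h1
      exact (div_eq_one_iff_eq hωc).mp h1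
    have : w.im = -ω.im := by rw [h2]; simp
    linarith
  have hW2 : Wfac z₂ p ≠ 0 := mul_ne_zero hz2 (Complex.exp_ne_zero _)
  by_cases hW1 : Wfac z₁ p = 0
  · have : Nfac w ω p = 0 := by rw [Nfac, ← hz₁def, ← hz₂def, hW1, zero_div]
    rw [this, norm_zero, Real.log_zero]
    exact RHSnn
  · have hz1 : (1:ℂ) - z₁ ≠ 0 := by
      intro hc; exact hW1 (by rw [Wfac, hc, zero_mul])
    have hlogW : ∀ z : ℂ, (1 - z) ≠ 0 →
        Real.log ‖Wfac z p‖ =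
          Real.log ‖1 - z‖ + (∑ k ∈ Finset.Icc 1 p, z^k/(k:ℂ)).re := by
      intro z hz
      rw [Wfac, norm_mul, Complex.norm_exp,
        Real.log_mul (norm_ne_zero_iff.mpr hz) (Real.exp_ne_zero _), Real.log_exp]
    have hlog1 : Real.log ‖1 - z₁‖ ≤ Real.log ‖1 - z₂‖ :=
      Real.log_le_log (norm_pos_iff.mpr hz1) (norm_one_sub_div_le w ω hw hω)
    -- power bound
    have hrpow : ∀ k : ℕ, k ≤ p → r^k ≤ 3^(p-k) * r^p := by
      intro k hk
      have h13 : (1/3 : ℝ) ≤ r := h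
      have e : r^k * r^(p-k) = r^p := by rw [← pow_add]; congr 1; omega
      calc r^k = (r^k * (1/3:ℝ)^(p-k)) * 3^(p-k) := by
            rw [mul_assoc, ← mul_pow]; norm_num
        _ ≤ (r^k * r^(p-k)) * 3^(p-k) := by
            gcongr
        _ = 3^(p-k) * r^p := by rw [e]; ring
    have hsum : (∑ k ∈ Finset.Icc 1 p, z₁^k/(k:ℂ)).re
        - (∑ k ∈ Finset.Icc 1 p, z₂^k/(k:ℂ)).re ≤
        (2 * ∑ k ∈ Finset.Icc 1 p, (3:ℝ)^(p-k)) * |Real.sin ω.arg| * r ^ p := by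
      calc (∑ k ∈ Finset.Icc 1 p, z₁^k/(k:ℂ)).re - (∑ k ∈ Finset.Icc 1 p, z₂^k/(k:ℂ)).re
          = ((∑ k ∈ Finset.Icc 1 p, z₁^k/(k:ℂ)) - (∑ k ∈ Finset.Icc 1 p, z₂^k/(k:ℂ))).re := by
            rw [Complex.sub_re]
        _ ≤ ‖(∑ k ∈ Finset.Icc 1 p, z₁^k/(k:ℂ)) - (∑ k ∈ Finset.Icc 1 p, z₂^k/(k:ℂ))‖ :=
            Complex.re_le_norm _
        _ = ‖∑ k ∈ Finset.Icc 1 p, (z₁^k - z₂^k)/(k:ℂ)‖ := by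
            rw [← Finset.sum_sub_distrib]
            congr 1
            exact Finset.sum_congr rfl fun k _ => (sub_div _ _ _).symm
        _ ≤ ∑ k ∈ Finset.Icc 1 p, ‖(z₁^k - z₂^k)/(k:ℂ)‖ := norm_sum_le _ _
        _ ≤ ∑ k ∈ Finset.Icc 1 p, 2 * |Real.sin ω.arg| * ((3:ℝ)^(p-k) * r^p) := by
            apply Finset.sum_le_sum
            intro k hk
            obtain ⟨hk1, hkp⟩ := Finset.mem_Icc.mp hk
            obtain ⟨m, rfl⟩ : ∃ m, k = m + 1 := ⟨k - 1, (Nat.succ_pred_eq_of_pos hk1).symm⟩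
            rw [norm_div]
            have hkn : ‖((m+1 : ℕ) : ℂ)‖ = ((m : ℝ)+1) := by
              rw [Complex.norm_natCast]; push_cast; ring
            calc ‖z₁^(m+1) - z₂^(m+1)‖ / ‖((m+1:ℕ):ℂ)‖
                ≤ (2 * ((m:ℝ)+1) * r^(m+1) * |Real.sin ω.arg|) / ((m:ℝ)+1) := by
                  rw [hkn]
                  apply div_le_div_of_nonneg_right ?_ (by positivity)
                  exact term_bound w ω hω0 m
              _ = 2 * |Real.sin ω.arg| * r^(m+1) := by
                  field_simp
              _ ≤ 2 * |Real.sin ω.arg| * ((3:ℝ)^(p-(m+1)) * r^p) := by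
                  gcongr
                  exact hrpow (m+1) hkp
        _ = (2 * ∑ k ∈ Finset.Icc 1 p, (3:ℝ)^(p-k)) * |Real.sin ω.arg| * r ^ p := by
            rw [Finset.mul_sum, Finset.sum_mul, Finset.sum_mul]
            exact Finset.sum_congr rfl fun k _ => by ring
    rw [Nfac, ← hz₁def, ← hz₂def, norm_div,
      Real.log_div (norm_ne_zero_iff.mpr hW1) (norm_ne_zero_iff.mpr hW2),
      hlogW _ hz1, hlogW _ hz2]
    linarith
end

section
/- For w, ω in the upper half-plane with ω = |ω|e^{iτ} and |w/ω| < 1/3, the Nevanlinna prime factor satisfies |N_p(w,ω) - 1| ≤ 6·|sin τ|·|w/ω|^{p+1}. -/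
/-- Tail of the log series: `∑_{k > p} z^k / k`. -/
noncomputable def Tail (z : ℂ) (p : ℕ) : ℂ :=
  ∑' k : ℕ, z ^ (k + (p + 1)) / ((k + (p + 1) : ℕ) : ℂ)

lemma summable_aux {z : ℂ} (hz : ‖z‖ < 1) :
    Summable (fun n : ℕ => z ^ n / (n : ℂ)) :=
  (Complex.hasSum_taylorSeries_neg_log hz).summable

lemma Wfac_eq_exp {z : ℂ} (hz : ‖z‖ < 1) (p : ℕ) :
    Wfac z p = Complex.exp (-(Tail z p)) := by
  have hne : (1 : ℂ) - z ≠ 0 := by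
    intro hh
    rw [sub_eq_zero] at hh
    rw [← hh] at hz
    simp at hz
  have hsum := Complex.hasSum_taylorSeries_neg_log hz
  have hsummable := hsum.summable
  have hsplit := Summable.sum_add_tsum_nat_add (f := fun n : ℕ => z ^ n / (n : ℂ)) (p + 1) hsummable
  have htsum : ∑' n : ℕ, z ^ n / (n : ℂ) = -Complex.log (1 - z) := hsum.tsum_eq
  have hfin : ∑ i ∈ Finset.range (p + 1), z ^ i / (i : ℂ)
      = ∑ k ∈ Finset.Icc 1 p, z ^ k / (k : ℂ) := by
    refine (Finset.sum_subset ?_ ?_).symm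
    · intro i hi
      exact Finset.mem_range_succ_iff.mpr (Finset.mem_Icc.mp hi).2
    · intro i hi hni
      have : i = 0 := by
        rcases Nat.eq_zero_or_pos i with h0 | h0
        · exact h0
        · exact absurd (Finset.mem_Icc.mpr ⟨h0, Finset.mem_range_succ_iff.mp hi⟩) hni
      simp [this]
  rw [htsum, hfin] at hsplit
  have key : Complex.log (1 - z) + ∑ k ∈ Finset.Icc 1 p, z ^ k / (k : ℂ) = -(Tail z p) := by
    have hTail : Tail z p = ∑' k : ℕ, z ^ (k + (p + 1)) / ((k + (p + 1) : ℕ) : ℂ) := rfl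
    rw [hTail]
    linear_combination hsplit
  rw [Wfac, ← key, Complex.exp_add, Complex.exp_log hne]

lemma pow_sub_pow_norm_le {z z' : ℂ} {x : ℝ} (hzx : ‖z‖ ≤ x) (hz'x : ‖z'‖ ≤ x) (n : ℕ) :
    ‖z' ^ (n + 1) - z ^ (n + 1)‖ ≤ (n + 1) * x ^ n * ‖z' - z‖ := by
  have hx0 : 0 ≤ x := le_trans (norm_nonneg z) hzx
  have h := geom_sum₂_mul z' z (n + 1)
  rw [← h, norm_mul]
  have hb : ‖∑ i ∈ Finset.range (n + 1), z' ^ i * z ^ (n + 1 - 1 - i)‖ ≤ (n + 1) * x ^ n := by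
    calc ‖∑ i ∈ Finset.range (n + 1), z' ^ i * z ^ (n + 1 - 1 - i)‖
        ≤ ∑ i ∈ Finset.range (n + 1), ‖z' ^ i * z ^ (n + 1 - 1 - i)‖ := norm_sum_le _ _
      _ ≤ ∑ _i ∈ Finset.range (n + 1), x ^ n := by
          apply Finset.sum_le_sum
          intro i hi
          rw [norm_mul, norm_pow, norm_pow]
          have hi' : i ≤ n := Nat.lt_succ_iff.mp (Finset.mem_range.mp hi)
          calc ‖z'‖ ^ i * ‖z‖ ^ (n + 1 - 1 - i) ≤ x ^ i * x ^ (n + 1 - 1 - i) := by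
                gcongr
            _ = x ^ n := by rw [← pow_add]; congr 1; omega
      _ = (n + 1) * x ^ n := by
          rw [Finset.sum_const, Finset.card_range, nsmul_eq_mul]
          push_cast
          ring
  calc ‖∑ i ∈ Finset.range (n + 1), z' ^ i * z ^ (n + 1 - 1 - i)‖ * ‖z' - z‖
      ≤ ((n + 1) * x ^ n) * ‖z' - z‖ := by gcongr
    _ = (n + 1) * x ^ n * ‖z' - z‖ := by ring

lemma tail_sub_le {z z' : ℂ} {x : ℝ} (hzx : ‖z‖ ≤ x) (hz'x : ‖z'‖ ≤ x) (hx : x < 1) (p : ℕ) :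
    ‖Tail z' p - Tail z p‖ ≤ ‖z' - z‖ * x ^ p / (1 - x) := by
  have hx0 : 0 ≤ x := le_trans (norm_nonneg z) hzx
  have hz1 : ‖z‖ < 1 := lt_of_le_of_lt hzx hx
  have hz'1 : ‖z'‖ < 1 := lt_of_le_of_lt hz'x hx
  have hs : Summable (fun k : ℕ => z ^ (k + (p + 1)) / ((k + (p + 1) : ℕ) : ℂ)) := by
    have := (summable_nat_add_iff (p + 1)).mpr (summable_aux hz1)
    simpa using this
  have hs' : Summable (fun k : ℕ => z' ^ (k + (p + 1)) / ((k + (p + 1) : ℕ) : ℂ)) := by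
    have := (summable_nat_add_iff (p + 1)).mpr (summable_aux hz'1)
    simpa using this
  have hsub : Tail z' p - Tail z p
      = ∑' k : ℕ, (z' ^ (k + (p + 1)) / ((k + (p + 1) : ℕ) : ℂ)
          - z ^ (k + (p + 1)) / ((k + (p + 1) : ℕ) : ℂ)) := (Summable.tsum_sub hs' hs).symm
  rw [hsub]
  have hgeom : HasSum (fun k : ℕ => ‖z' - z‖ * x ^ p * x ^ k)
      (‖z' - z‖ * x ^ p * (1 - x)⁻¹) :=
    (hasSum_geometric_of_lt_one hx0 hx).mul_left _
  have hbound : ∀ k : ℕ, ‖z' ^ (k + (p + 1)) / ((k + (p + 1) : ℕ) : ℂ)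
      - z ^ (k + (p + 1)) / ((k + (p + 1) : ℕ) : ℂ)‖ ≤ ‖z' - z‖ * x ^ p * x ^ k := by
    intro k
    rw [div_sub_div_same, norm_div]
    have hnum : ‖z' ^ (k + (p + 1)) - z ^ (k + (p + 1))‖
        ≤ ((k + p : ℕ) + 1) * x ^ (k + p) * ‖z' - z‖ := by
      have := pow_sub_pow_norm_le hzx hz'x (n := k + p)
      convert this using 3 <;> ring
    have hden : ‖((k + (p + 1) : ℕ) : ℂ)‖ = ((k + p : ℕ) + 1 : ℝ) := by
      rw [Complex.norm_natCast]
      push_cast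
      ring
    rw [hden]
    have hpos : (0 : ℝ) < (k + p : ℕ) + 1 := by positivity
    rw [div_le_iff₀ hpos]
    calc ‖z' ^ (k + (p + 1)) - z ^ (k + (p + 1))‖
        ≤ ((k + p : ℕ) + 1) * x ^ (k + p) * ‖z' - z‖ := hnum
      _ = (‖z' - z‖ * x ^ p * x ^ k) * ((k + p : ℕ) + 1) := by
          rw [pow_add]; ring
  calc ‖∑' k : ℕ, (z' ^ (k + (p + 1)) / ((k + (p + 1) : ℕ) : ℂ)
          - z ^ (k + (p + 1)) / ((k + (p + 1) : ℕ) : ℂ))‖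
      ≤ ‖z' - z‖ * x ^ p * (1 - x)⁻¹ := tsum_of_norm_bounded hgeom hbound
    _ = ‖z' - z‖ * x ^ p / (1 - x) := by rw [div_eq_mul_inv]

theorem stmt5 (p : ℕ) (w ω : ℂ) (hw : 0 < w.im) (hω : 0 < ω.im)
    (h : ‖w / ω‖ < 1 / 3) :
    ‖Nfac w ω p - 1‖ ≤ 6 * |Real.sin ω.arg| * ‖w / ω‖ ^ (p + 1) := by
  have hω0 : ω ≠ 0 := by
    intro hh
    rw [hh] at hω
    simp at hω
  have hcω0 : (starRingEnd ℂ) ω ≠ 0 := by simpa using hω0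
  set z : ℂ := w / ω with hzdef
  set z' : ℂ := w / (starRingEnd ℂ ω) with hz'def
  have hxz' : ‖z'‖ = ‖z‖ := by
    rw [hzdef, hz'def, norm_div, norm_div, RCLike.norm_conj]
  set x : ℝ := ‖z‖ with hxdef
  have hx0 : 0 ≤ x := norm_nonneg _
  have hx3 : x < 1 / 3 := h
  have hx1 : x < 1 := by linarith
  have hz1 : ‖z‖ < 1 := hx1
  have hz'1 : ‖z'‖ < 1 := by rw [hxz']; exact hx1
  have hN : Nfac w ω p = Complex.exp (Tail z' p - Tail z p) := by
    rw [Nfac, ← hzdef, ← hz'def, Wfac_eq_exp hz1, Wfac_eq_exp hz'1, ← Complex.exp_sub]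
    congr 1
    ring
  set s : ℝ := |Real.sin ω.arg| with hsdef
  have hs0 : 0 ≤ s := abs_nonneg _
  have hs1 : s ≤ 1 := abs_le.mpr ⟨Real.neg_one_le_sin _, Real.sin_le_one _⟩
  have hsin : s = |ω.im| / ‖ω‖ := by
    rw [hsdef, Complex.sin_arg, abs_div, abs_of_nonneg (norm_nonneg ω)]
  have hdiff : ‖z' - z‖ = 2 * s * x := by
    have heq : z' - z = z * ((ω - (starRingEnd ℂ) ω) / (starRingEnd ℂ ω)) := by
      rw [hzdef, hz'def]
      field_simp
    have hωn : (0:ℝ) < ‖ω‖ := norm_pos_iff.mpr hω0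
    rw [heq, hsin, norm_mul]
    have hq : ‖(ω - (starRingEnd ℂ) ω) / (starRingEnd ℂ ω)‖ = 2 * |ω.im| / ‖ω‖ := by
      rw [norm_div, RCLike.norm_conj, Complex.sub_conj, norm_mul, Complex.norm_real,
        Complex.norm_I, mul_one, Real.norm_eq_abs, abs_mul]
      norm_num
    rw [hq]
    ring
  have hL : ‖Tail z' p - Tail z p‖ ≤ ‖z' - z‖ * x ^ p / (1 - x) :=
    tail_sub_le (le_refl x) (le_of_eq hxz') hx1 p
  have hLb : ‖Tail z' p - Tail z p‖ ≤ 2 * s * x ^ (p + 1) / (1 - x) := by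
    rw [hdiff] at hL
    calc ‖Tail z' p - Tail z p‖ ≤ 2 * s * x * x ^ p / (1 - x) := hL
      _ = 2 * s * x ^ (p + 1) / (1 - x) := by rw [pow_succ]; ring
  have hxp : x ^ (p + 1) ≤ x := by
    calc x ^ (p + 1) = x ^ p * x := pow_succ x p
      _ ≤ 1 * x := by
          gcongr
          exact pow_le_one₀ hx0 hx1.le
      _ = x := one_mul x
  have hL1 : ‖Tail z' p - Tail z p‖ ≤ 1 := by
    have h1x : (0:ℝ) < 1 - x := by linarith
    refine hLb.trans ?_
    rw [div_le_one h1x]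
    nlinarith
  have h2 : ‖Nfac w ω p - 1‖ ≤ 2 * ‖Tail z' p - Tail z p‖ := by
    rw [hN]
    simpa using
      Complex.norm_exp_sub_one_le (x := Tail z' p - Tail z p)
        (by simpa using hL1)
  have h1x : (0:ℝ) < 1 - x := by linarith
  calc ‖Nfac w ω p - 1‖ ≤ 2 * ‖Tail z' p - Tail z p‖ := h2
    _ ≤ 2 * (2 * s * x ^ (p + 1) / (1 - x)) := by gcongr
    _ ≤ 6 * s * x ^ (p + 1) := by
        have ht : 0 ≤ s * x ^ (p + 1) := by positivity
        have heq : 2 * (2 * s * x ^ (p + 1) / (1 - x)) = 4 * (s * x ^ (p + 1)) / (1 - x) := by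
          ring
        rw [heq, div_le_iff₀ h1x]
        nlinarith [mul_nonneg ht (by linarith : (0:ℝ) ≤ 1 - 3 * x)]
end

section
/- Let E be a nonempty closed subset of the unit circle and write its open complement as a disjoint union of open arcs γ_j with |γ_j| decreasing to 0. Then for small x > 0, the measure of the x-neighborhood satisfies |E_x| = ∑_{j=N+1}^∞ |γ_j| + (2N/π)·arcsin(x/2) + |E|, where N = N(x) is determined by |γ_{N+1}| ≤ (2/π)·arcsin(x/2) < |γ_N|. -/
open MeasureTheory Metric Set Filter

instance : Fact ((0 : ℝ) < 1) := ⟨one_pos⟩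

/-- Let `E` be a nonempty closed subset of the unit circle (modelled as `ℝ/ℤ`, so
that normalized arc length gives `|T| = 1`; a point at normalized arc distance `s`
is at chordal distance `2 sin (π s)`).  Write the open complement of `E` as a
disjoint union of open arcs `γ_j = ball (c j) (ℓ j / 2)` of lengths `ℓ j ↓ 0`.
Then for small `x > 0`, the normalized measure of the chordal `x`-neighborhood
`E_x = {t : ∃ e ∈ E, chordal-dist(t,e) < x}` equals
`∑_{j > N} |γ_j| + (2N/π) arcsin (x/2) + |E|`, where `N` (the number of "long"
gaps) is determined by `|γ_{N+1}| ≤ (2/π) arcsin (x/2) < |γ_N|`.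
(Here gaps are indexed from `0`, so the long gaps are `γ_0, …, γ_M` and
`N = M + 1` counts them.) -/
theorem stmt9 (E : Set (AddCircle (1 : ℝ))) (hE : IsClosed E) (hne : E.Nonempty)
    (c : ℕ → AddCircle (1 : ℝ)) (ℓ : ℕ → ℝ) (hpos : ∀ j, 0 < ℓ j)
    (hdisj : Pairwise fun i j => Disjoint (Metric.ball (c i) (ℓ i / 2)) (Metric.ball (c j) (ℓ j / 2)))
    (hunion : Eᶜ = ⋃ j, Metric.ball (c j) (ℓ j / 2))
    (hlen : ∀ j, volume (Metric.ball (c j) (ℓ j / 2)) = ENNReal.ofReal (ℓ j))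
    (hmono : Antitone ℓ) (hlim : Tendsto ℓ atTop (nhds 0)) :
    ∃ x₀ > 0, ∀ x, 0 < x → x < x₀ → ∀ M : ℕ,
      ℓ (M + 1) ≤ (2 / Real.pi) * Real.arcsin (x / 2) →
      (2 / Real.pi) * Real.arcsin (x / 2) < ℓ M →
      (volume {t : AddCircle (1 : ℝ) | ∃ e ∈ E, 2 * Real.sin (Real.pi * dist t e) < x}).toReal
        = (∑' j : ℕ, ℓ (M + 1 + j)) +
            (2 * ((M : ℝ) + 1) / Real.pi) * Real.arcsin (x / 2) + (volume E).toReal := by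
  refine ⟨1, one_pos, ?_⟩
  intro x hx0 hx1 M hM1 hM2
  have hπ : (0:ℝ) < Real.pi := Real.pi_pos
  set s : ℝ := (2 / Real.pi) * Real.arcsin (x / 2) with hs_def
  have hx2 : 0 < x/2 := by linarith
  have hx21 : x/2 ≤ 1 := by linarith
  have harc_pos : 0 < Real.arcsin (x/2) := Real.arcsin_pos.2 hx2
  have hs_pos : 0 < s := by
    rw [hs_def]; positivity
  -- every gap has length at most 1
  have hone : ∀ j, ℓ j ≤ 1 := by
    intro j
    have h : volume (Metric.ball (c j) (ℓ j / 2))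
        ≤ volume (Set.univ : Set (AddCircle (1:ℝ))) := measure_mono (subset_univ _)
    rw [hlen j, AddCircle.measure_univ] at h
    exact (ENNReal.ofReal_le_ofReal_iff zero_le_one).1 h
  -- distances on the circle are at most 1/2
  have hdist_half : ∀ t e : AddCircle (1:ℝ), dist t e ≤ 1/2 := by
    intro t e
    rw [dist_eq_norm]
    simpa using AddCircle.norm_le_half_period (p := (1:ℝ)) one_ne_zero
  have hnorm : ∀ b : ℝ, |b| ≤ 1/2 → ‖(b : AddCircle (1:ℝ))‖ = |b| := by
    intro b hb
    rw [AddCircle.norm_coe_eq_abs_iff (1:ℝ) one_ne_zero]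
    simpa using hb
  have hnorm_le : ∀ b : ℝ, ‖(b : AddCircle (1:ℝ))‖ ≤ |b| := by
    intro b
    simpa using QuotientAddGroup.norm_mk_le_norm (S := AddSubgroup.zmultiples (1:ℝ)) (m := b)
  -- the chordal condition in terms of arc distance
  have hsin : ∀ d : ℝ, 0 ≤ d → d ≤ 1/2 → (2 * Real.sin (Real.pi * d) < x ↔ d < s/2) := by
    intro d hd0 hd2
    have hmem1 : Real.pi * d ∈ Icc (-(Real.pi/2)) (Real.pi/2) :=
      ⟨by nlinarith, by nlinarith⟩
    have hmem2 := Real.arcsin_mem_Icc (x/2)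
    have key : Real.sin (Real.pi*d) < Real.sin (Real.arcsin (x/2)) ↔
        Real.pi * d < Real.arcsin (x/2) :=
      Real.strictMonoOn_sin.lt_iff_lt hmem1 hmem2
    rw [Real.sin_arcsin (by linarith) hx21] at key
    have h3 : d < s/2 ↔ Real.pi * d < Real.arcsin (x/2) := by
      rw [hs_def]
      rw [show (2 / Real.pi * Real.arcsin (x/2)) / 2 = Real.arcsin (x/2) / Real.pi by
        field_simp]
      rw [lt_div_iff₀ hπ, mul_comm]
    constructor
    · intro h
      exact h3.2 (key.1 (by linarith))
    · intro h
      have := key.2 (h3.1 h)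
      linarith
  set A : Set (AddCircle (1:ℝ)) :=
    {t | ∃ e ∈ E, 2 * Real.sin (Real.pi * dist t e) < x} with hA_def
  have hA_eq : A = {t | Metric.infDist t E < s/2} := by
    ext t
    simp only [hA_def, mem_setOf_eq]
    constructor
    · rintro ⟨e, he, hlt⟩
      exact (Metric.infDist_lt_iff hne).2 ⟨e, he, (hsin _ dist_nonneg (hdist_half t e)).1 hlt⟩
    · intro h
      obtain ⟨e, he, hlt⟩ := (Metric.infDist_lt_iff hne).1 h
      exact ⟨e, he, (hsin _ dist_nonneg (hdist_half t e)).2 hlt⟩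
  have hball_sub : ∀ j, Metric.ball (c j) (ℓ j / 2) ⊆ Eᶜ := by
    intro j
    rw [hunion]
    exact subset_iUnion (fun j => Metric.ball (c j) (ℓ j / 2)) j
  -- the endpoints of each gap belong to E
  have hend : ∀ j (a : ℝ), |a| = ℓ j / 2 → c j + (a : AddCircle (1:ℝ)) ∈ E := by
    intro j a ha
    by_contra hnot
    have hmem : c j + (a : AddCircle (1:ℝ)) ∈ ⋃ k, Metric.ball (c k) (ℓ k / 2) := by
      rw [← hunion]; exact hnot
    obtain ⟨k, hk⟩ := mem_iUnion.1 hmem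
    rw [Metric.mem_ball] at hk
    have habs2 : |a| ≤ 1/2 := by rw [ha]; linarith [hone j]
    have hdca : dist (c j + (a : AddCircle (1:ℝ))) (c j) = ℓ j / 2 := by
      rw [dist_eq_norm, add_sub_cancel_left, hnorm a habs2, ha]
    rcases eq_or_ne k j with rfl | hkj
    · rw [hdca] at hk; exact lt_irrefl _ hk
    · set r : ℝ := ℓ j / 2 with hr_def
      have hr : 0 < r := by rw [hr_def]; linarith [hpos j]
      set ε : ℝ := min r ((ℓ k / 2 - dist (c j + (a : AddCircle (1:ℝ))) (c k)) / 2) with hε_def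
      have hε_pos : 0 < ε := lt_min hr (by linarith)
      have hε_r : ε ≤ r := min_le_left _ _
      have hε_k : ε ≤ (ℓ k / 2 - dist (c j + (a : AddCircle (1:ℝ))) (c k)) / 2 :=
        min_le_right _ _
      set b : ℝ := a * (1 - ε / r) with hb_def
      have h1r : 0 ≤ 1 - ε / r := by
        rw [sub_nonneg, div_le_one hr]; exact hε_r
      have hεr : r * (ε / r) = ε := by field_simp
      have hab : |b| = r - ε := by
        rw [hb_def, abs_mul, ha, abs_of_nonneg h1r, mul_sub, mul_one, hεr]
      have hbmem1 : (c j + (b : AddCircle (1:ℝ))) ∈ Metric.ball (c j) (ℓ j / 2) := by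
        rw [Metric.mem_ball, dist_eq_norm, add_sub_cancel_left,
          hnorm b (by rw [hab]; linarith [hone j, hε_pos, hr_def.le]), hab]
        linarith [hε_pos, hr_def.le]
      have hba : |b - a| = ε := by
        have h1 : b - a = -(a * (ε / r)) := by rw [hb_def]; ring
        rw [h1, abs_neg, abs_mul, ha, abs_of_nonneg (div_nonneg hε_pos.le hr.le), hεr]
      have hqe : dist (c j + (b : AddCircle (1:ℝ))) (c j + (a : AddCircle (1:ℝ))) ≤ ε := by
        rw [dist_eq_norm]
        have h2 : (c j + (b : AddCircle (1:ℝ))) - (c j + (a : AddCircle (1:ℝ)))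
            = ((b - a : ℝ) : AddCircle (1:ℝ)) := by
          rw [QuotientAddGroup.mk_sub]; abel
        rw [h2]
        calc ‖((b - a : ℝ) : AddCircle (1:ℝ))‖ ≤ |b - a| := hnorm_le _
        _ = ε := hba
      have hbmem2 : (c j + (b : AddCircle (1:ℝ))) ∈ Metric.ball (c k) (ℓ k / 2) := by
        rw [Metric.mem_ball]
        calc dist (c j + (b : AddCircle (1:ℝ))) (c k)
            ≤ dist (c j + (b : AddCircle (1:ℝ))) (c j + (a : AddCircle (1:ℝ)))
              + dist (c j + (a : AddCircle (1:ℝ))) (c k) := dist_triangle _ _ _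
        _ < ℓ k / 2 := by linarith
      exact Set.disjoint_left.1 (hdisj hkj) hbmem2 hbmem1
  -- the complement of A is the union of the shrunken closed balls
  have hC : Aᶜ = ⋃ j, Metric.closedBall (c j) ((ℓ j - s)/2) := by
    rw [hA_eq]
    ext t
    simp only [mem_compl_iff, mem_setOf_eq, not_lt, mem_iUnion, Metric.mem_closedBall]
    constructor
    · intro hinf
      have htE : t ∉ E := by
        intro ht
        have := Metric.infDist_zero_of_mem ht
        rw [this] at hinf
        linarith
      have hmem : t ∈ ⋃ j, Metric.ball (c j) (ℓ j / 2) := by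
        rw [← hunion]; exact htE
      obtain ⟨j, htj⟩ := mem_iUnion.1 hmem
      rw [Metric.mem_ball] at htj
      refine ⟨j, ?_⟩
      obtain ⟨y, hy⟩ := QuotientAddGroup.mk_surjective (t - c j)
      set u : ℝ := y - round y with hu_def
      have hu : (u : AddCircle (1:ℝ)) = t - c j := by
        have h0 : (((round y : ℝ)) : AddCircle (1:ℝ)) = 0 := by
          rw [AddCircle.coe_eq_zero_iff]; exact ⟨round y, by simp⟩
        rw [hu_def,
          show ((y - (round y : ℝ) : ℝ) : AddCircle (1:ℝ))
            = (y : AddCircle (1:ℝ)) - ((round y : ℝ) : AddCircle (1:ℝ)) from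
            QuotientAddGroup.mk_sub _ _ _, h0, sub_zero, hy]
      have hu_half : |u| ≤ 1/2 := by rw [hu_def]; exact abs_sub_round y
      have hnu : dist t (c j) = |u| := by
        rw [dist_eq_norm, ← hu, hnorm u hu_half]
      have huu : |u| < ℓ j / 2 := by rw [← hnu]; exact htj
      set a : ℝ := if 0 ≤ u then ℓ j / 2 else -(ℓ j / 2) with ha_def
      have haabs : |a| = ℓ j / 2 := by
        rw [ha_def]
        split_ifs
        · exact abs_of_nonneg (by linarith [hpos j])
        · rw [abs_neg]; exact abs_of_nonneg (by linarith [hpos j])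
      have heE := hend j a haabs
      have hle : Metric.infDist t E ≤ dist t (c j + (a : AddCircle (1:ℝ))) :=
        Metric.infDist_le_dist_of_mem heE
      have habs_ua : |u - a| = ℓ j / 2 - |u| := by
        rw [ha_def]
        rcases le_or_gt 0 u with h0 | h0
        · rw [if_pos h0, abs_of_nonpos (by rw [abs_of_nonneg h0] at huu; linarith),
            abs_of_nonneg h0]
          ring
        · rw [if_neg (not_le.2 h0), sub_neg_eq_add,
            abs_of_nonneg (by rw [abs_of_neg h0] at huu; linarith), abs_of_neg h0]
          ring
      have hdist : dist t (c j + (a : AddCircle (1:ℝ))) ≤ ℓ j / 2 - |u| := by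
        rw [dist_eq_norm,
          show t - (c j + (a : AddCircle (1:ℝ))) = ((u - a : ℝ) : AddCircle (1:ℝ)) from by
            rw [QuotientAddGroup.mk_sub, hu]; abel]
        calc ‖((u - a : ℝ) : AddCircle (1:ℝ))‖ ≤ |u - a| := hnorm_le _
        _ = ℓ j / 2 - |u| := habs_ua
      rw [hnu]
      linarith
    · rintro ⟨j, htj⟩
      by_contra hcon
      rw [not_le] at hcon
      obtain ⟨e, he, hlt⟩ := (Metric.infDist_lt_iff hne).1 hcon
      have heb : ℓ j / 2 ≤ dist e (c j) := by
        by_contra h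
        exact (hball_sub j (Metric.mem_ball.2 (not_le.1 h))) he
      have h3 := dist_triangle e t (c j)
      rw [dist_comm e t] at h3
      linarith
  -- measurability
  have hAmeas : MeasurableSet A := by
    rw [hA_eq]
    exact measurableSet_lt (Metric.continuous_infDist_pt E).measurable measurable_const
  have hnn : ∀ j ∈ Finset.range (M+1), 0 ≤ ℓ j - s := by
    intro j hj
    have : j ≤ M := Nat.lt_succ_iff.1 (Finset.mem_range.1 hj)
    have := hmono this
    linarith
  have hsub_cb : ∀ j, Metric.closedBall (c j) ((ℓ j - s)/2) ⊆ Metric.ball (c j) (ℓ j / 2) :=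
    fun j => Metric.closedBall_subset_ball (by linarith)
  have hvolC : volume Aᶜ = ENNReal.ofReal (∑ j ∈ Finset.range (M+1), (ℓ j - s)) := by
    rw [hC, measure_iUnion (fun i j hij => (hdisj hij).mono (hsub_cb i) (hsub_cb j))
      (fun j => measurableSet_closedBall)]
    have hterm : ∀ j, volume (Metric.closedBall (c j) ((ℓ j - s)/2))
        = ENNReal.ofReal (min 1 (ℓ j - s)) := by
      intro j
      rw [AddCircle.volume_closedBall 1]
      congr 1
      rw [show (2:ℝ) * ((ℓ j - s)/2) = ℓ j - s by ring]
    simp_rw [hterm]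
    have h0 : ∀ j ∉ Finset.range (M+1), ENNReal.ofReal (min 1 (ℓ j - s)) = 0 := by
      intro j hj
      have hjM : M + 1 ≤ j := not_lt.1 (fun h => hj (Finset.mem_range.2 h))
      have := hmono hjM
      rw [ENNReal.ofReal_eq_zero]
      exact le_trans (min_le_right _ _) (by linarith)
    calc ∑' j, ENNReal.ofReal (min 1 (ℓ j - s))
        = ∑ j ∈ Finset.range (M+1), ENNReal.ofReal (min 1 (ℓ j - s)) := tsum_eq_sum h0
      _ = ∑ j ∈ Finset.range (M+1), ENNReal.ofReal (ℓ j - s) :=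
          Finset.sum_congr rfl fun j hj => by
            rw [min_eq_right (by linarith [hone j, hs_pos] : ℓ j - s ≤ 1)]
      _ = ENNReal.ofReal (∑ j ∈ Finset.range (M+1), (ℓ j - s)) :=
          (ENNReal.ofReal_sum_of_nonneg hnn).symm
  have hSnn : 0 ≤ ∑ j ∈ Finset.range (M+1), (ℓ j - s) := Finset.sum_nonneg hnn
  have hvolA : (volume A).toReal = 1 - ∑ j ∈ Finset.range (M+1), (ℓ j - s) := by
    have htot : volume A + volume Aᶜ = 1 := by
      rw [measure_add_measure_compl hAmeas]
      simp
    have h := congrArg ENNReal.toReal htot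
    rw [ENNReal.toReal_add (measure_ne_top _ _) (measure_ne_top _ _), hvolC,
      ENNReal.toReal_ofReal hSnn, ENNReal.toReal_one] at h
    linarith
  -- the measure of E
  have hvolEc : volume Eᶜ = ∑' j, ENNReal.ofReal (ℓ j) := by
    rw [hunion, measure_iUnion hdisj (fun j => measurableSet_ball)]
    exact tsum_congr hlen
  have hEcfin : (∑' j, ENNReal.ofReal (ℓ j)) ≠ ⊤ := hvolEc ▸ measure_ne_top _ _
  have hsumm : Summable ℓ :=
    (ENNReal.summable_toReal hEcfin).congr fun j => ENNReal.toReal_ofReal (hpos j).le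
  have hvolE : (volume E).toReal = 1 - ∑' j, ℓ j := by
    have htotE : volume E + volume Eᶜ = 1 := by
      rw [measure_add_measure_compl hE.measurableSet]
      simp
    have h2 : (volume Eᶜ).toReal = ∑' j, ℓ j := by
      rw [hvolEc, ENNReal.tsum_toReal_eq (fun j => ENNReal.ofReal_ne_top)]
      exact tsum_congr fun j => ENNReal.toReal_ofReal (hpos j).le
    have h := congrArg ENNReal.toReal htotE
    rw [ENNReal.toReal_add (measure_ne_top _ _) (measure_ne_top _ _), h2,
      ENNReal.toReal_one] at h
    linarith
  have htail : ∑' j, ℓ (M + 1 + j) = (∑' j, ℓ j) - ∑ j ∈ Finset.range (M+1), ℓ j := by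
    have h := Summable.sum_add_tsum_nat_add (f := ℓ) (M+1) hsumm
    have hcomm : ∑' (i:ℕ), ℓ (i + (M+1)) = ∑' j, ℓ (M+1+j) :=
      tsum_congr fun i => by rw [add_comm]
    rw [hcomm] at h
    linarith
  rw [hvolA, hvolE, htail]
  have hsum_split : ∑ j ∈ Finset.range (M+1), (ℓ j - s)
      = (∑ j ∈ Finset.range (M+1), ℓ j) - ((M:ℝ)+1) * s := by
    rw [Finset.sum_sub_distrib, Finset.sum_const, Finset.card_range, nsmul_eq_mul]
    push_cast
    ring
  rw [hsum_split, hs_def]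
  ring
end

section
/- For γ > 1, the set E = {e^{iφ_n} : φ_n = c·∑_{k=n}^∞ k^{-γ}} ∪ {1}, where c^{-1} = ∑_{k=1}^∞ k^{-γ}, is closed in the unit circle and has Ahern–Clark type β(E) = 1 - 1/γ. -/
open MeasureTheory Metric Set Filter
open scoped Topology
open scoped ENNReal

/-- Normalized Lebesgue measure `|E_x|` of the open `x`-neighborhood (in arc-length
distance) of a set on the unit circle, modelled as `ℝ/ℤ` (so `|T| = 1`). -/
noncomputable def nbd (E : Set (AddCircle (1 : ℝ))) (x : ℝ) : ℝ :=
  (volume (Metric.thickening x E)).toReal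

/-- The Ahern–Clark type `β(E) = sup {β ∈ ℝ : |E_x| = O(x^β), x → 0}`. -/
noncomputable def ACtype (E : Set (AddCircle (1 : ℝ))) : ℝ :=
  sSup {β : ℝ | (fun x => nbd E x) =O[𝓝[>] (0 : ℝ)] fun x => x ^ β}

/-- The normalizing constant `c` with `c⁻¹ = ∑_{k=1}^∞ k^{-γ}`. -/
noncomputable def cγ (γ : ℝ) : ℝ := (∑' k : ℕ, ((k : ℝ) + 1) ^ (-γ))⁻¹

/-- The angles `φ_n = c ∑_{k=n}^∞ k^{-γ}` (for `n ≥ 1`). -/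
noncomputable def φγ (γ : ℝ) (n : ℕ) : ℝ := cγ γ * ∑' k : ℕ, ((n : ℝ) + (k : ℝ)) ^ (-γ)

/-- The set `E = {e^{iφ_n} : n ≥ 1} ∪ {1}`, viewed on the circle `ℝ/ℤ`
(the point `e^{iφ}` has normalized coordinate `φ / (2π)`). -/
noncomputable def E11 (γ : ℝ) : Set (AddCircle (1 : ℝ)) :=
  {p | ∃ n : ℕ, 1 ≤ n ∧ p = ((φγ γ n / (2 * Real.pi) : ℝ) : AddCircle (1 : ℝ))} ∪
    {((0 : ℝ) : AddCircle (1 : ℝ))}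

namespace Stmt11Aux

variable {γ : ℝ}


lemma summable_shift (hγ : 1 < γ) (n : ℕ) :
    Summable (fun k : ℕ => ((n : ℝ) + (k : ℝ)) ^ (-γ)) := by
  have h : Summable (fun k : ℕ => (k : ℝ) ^ (-γ)) :=
    Real.summable_nat_rpow.2 (by linarith)
  have h2 := (summable_nat_add_iff (f := fun k : ℕ => (k : ℝ) ^ (-γ)) n).2 h
  refine h2.congr fun k => ?_
  push_cast
  rw [add_comm]

lemma summable_shift' (hγ : 1 < γ) : Summable (fun k : ℕ => ((k : ℝ) + 1) ^ (-γ)) :=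
  (summable_shift hγ 1).congr fun k => by push_cast; rw [add_comm]

lemma sum1_pos (hγ : 1 < γ) : 0 < ∑' k : ℕ, ((k : ℝ) + 1) ^ (-γ) := by
  refine Summable.tsum_pos (summable_shift' hγ) (fun i => Real.rpow_nonneg (by positivity) _) 0 ?_
  norm_num

lemma c_pos (hγ : 1 < γ) : 0 < cγ γ := inv_pos.2 (sum1_pos hγ)

lemma tail_pos (hγ : 1 < γ) {n : ℕ} (hn : 1 ≤ n) :
    0 < ∑' k : ℕ, ((n : ℝ) + (k : ℝ)) ^ (-γ) := by
  refine Summable.tsum_pos (summable_shift hγ n) (fun i => Real.rpow_nonneg (by positivity) _) 0 ?_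
  have : (0:ℝ) < (n:ℝ) := by exact_mod_cast hn
  have : (0:ℝ) < (n:ℝ) + (0:ℕ) := by push_cast; linarith
  exact Real.rpow_pos_of_pos this _

lemma phi_pos (hγ : 1 < γ) {n : ℕ} (hn : 1 ≤ n) : 0 < φγ γ n :=
  mul_pos (c_pos hγ) (tail_pos hγ hn)

lemma phi_nonneg (hγ : 1 < γ) (n : ℕ) : 0 ≤ φγ γ n :=
  mul_nonneg (c_pos hγ).le (tsum_nonneg fun i => Real.rpow_nonneg (by positivity) _)

lemma phi_step (hγ : 1 < γ) (n : ℕ) :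
    φγ γ n = cγ γ * (n : ℝ) ^ (-γ) + φγ γ (n + 1) := by
  have h := Summable.tsum_eq_zero_add (summable_shift hγ n)
  have h2 : ∑' k : ℕ, ((n : ℝ) + ((k : ℕ) + 1 : ℕ)) ^ (-γ)
      = ∑' k : ℕ, (((n + 1 : ℕ) : ℝ) + (k : ℝ)) ^ (-γ) := by
    refine tsum_congr fun k => ?_
    push_cast
    ring_nf
  unfold φγ
  rw [h]
  push_cast at h2 ⊢
  rw [h2]
  ring

lemma phi_succ_le (hγ : 1 < γ) (n : ℕ) : φγ γ (n + 1) ≤ φγ γ n := by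
  have h := phi_step hγ n
  have : 0 ≤ cγ γ * (n : ℝ) ^ (-γ) :=
    mul_nonneg (c_pos hγ).le (Real.rpow_nonneg (by positivity) _)
  linarith

lemma phi_anti (hγ : 1 < γ) : Antitone (φγ γ) :=
  antitone_nat_of_succ_le (phi_succ_le hγ)

lemma phi_one (hγ : 1 < γ) : φγ γ 1 = 1 := by
  unfold φγ
  have h2 : ∑' k : ℕ, (((1:ℕ) : ℝ) + (k : ℝ)) ^ (-γ)
      = ∑' k : ℕ, ((k : ℝ) + 1) ^ (-γ) := by
    refine tsum_congr fun k => ?_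
    push_cast
    ring_nf
  push_cast at h2 ⊢
  rw [h2, cγ, inv_mul_cancel₀ (sum1_pos hγ).ne']

lemma phi_le_one (hγ : 1 < γ) (n : ℕ) : φγ γ n ≤ 1 := by
  rcases Nat.eq_zero_or_pos n with rfl | hn
  · have h := phi_step hγ 0
    rw [Nat.cast_zero, Real.zero_rpow (by intro h'; simp at h'; linarith : -γ ≠ 0)] at h
    simp only [mul_zero, zero_add] at h
    rw [h, phi_one hγ]
  · calc φγ γ n ≤ φγ γ 1 := phi_anti hγ hn
      _ = 1 := phi_one hγ

lemma phi_tendsto (hγ : 1 < γ) : Tendsto (φγ γ) atTop (𝓝 0) := by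
  have h := tendsto_sum_nat_add (fun j : ℕ => (j : ℝ) ^ (-γ))
  have hS : ∀ n : ℕ, (∑' k : ℕ, (((k + n : ℕ) : ℝ)) ^ (-γ))
      = ∑' k : ℕ, ((n : ℝ) + (k : ℝ)) ^ (-γ) := by
    intro n
    refine tsum_congr fun k => ?_
    push_cast
    rw [add_comm]
  have h2 : Tendsto (fun n : ℕ => ∑' k : ℕ, ((n : ℝ) + (k : ℝ)) ^ (-γ)) atTop (𝓝 0) :=
    Tendsto.congr hS h
  have h3 := h2.const_mul (cγ γ)
  rw [mul_zero] at h3; exact h3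

lemma tail_lower (hγ : 1 < γ) {n : ℕ} (hn : 1 ≤ n) :
    (n : ℝ) * (2 * (n : ℝ)) ^ (-γ) ≤ ∑' k : ℕ, ((n : ℝ) + (k : ℝ)) ^ (-γ) := by
  have hn' : (1:ℝ) ≤ (n:ℝ) := by exact_mod_cast hn
  have h1 : ∀ k ∈ Finset.range n, (2 * (n : ℝ)) ^ (-γ) ≤ ((n : ℝ) + (k : ℝ)) ^ (-γ) := by
    intro k hk
    have hk' : (k : ℝ) < n := by exact_mod_cast Finset.mem_range.1 hk
    exact Real.rpow_le_rpow_of_nonpos (by linarith) (by linarith) (by linarith)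
  have h2 := Finset.card_nsmul_le_sum (Finset.range n)
      (fun k : ℕ => ((n : ℝ) + (k : ℝ)) ^ (-γ)) ((2 * (n : ℝ)) ^ (-γ)) h1
  rw [Finset.card_range, nsmul_eq_mul] at h2
  refine h2.trans (Summable.sum_le_tsum _ (fun i _ => Real.rpow_nonneg (by positivity) _)
    (summable_shift hγ n))

lemma tail_upper (hγ : 1 < γ) {s : ℝ} (hs1 : 1 < s) (hsγ : s ≤ γ) {n : ℕ} (hn : 1 ≤ n) :
    ∑' k : ℕ, ((n : ℝ) + (k : ℝ)) ^ (-γ)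
      ≤ (n : ℝ) ^ (s - γ) * ∑' k : ℕ, ((k : ℝ) + 1) ^ (-s) := by
  have hn' : (1:ℝ) ≤ (n:ℝ) := by exact_mod_cast hn
  have hs' : 1 < s := hs1
  have hsum_s : Summable (fun k : ℕ => ((k : ℝ) + 1) ^ (-s)) := summable_shift' hs1
  have hpt : ∀ k : ℕ, ((n : ℝ) + (k : ℝ)) ^ (-γ)
      ≤ (n : ℝ) ^ (s - γ) * (((k : ℝ) + 1) ^ (-s)) := by
    intro k
    have ha : (0:ℝ) < (n : ℝ) + (k : ℝ) := by positivity
    have h0 : ((n : ℝ) + (k : ℝ)) ^ (-γ)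
        = ((n : ℝ) + (k : ℝ)) ^ (s - γ) * ((n : ℝ) + (k : ℝ)) ^ (-s) := by
      rw [← Real.rpow_add ha]; ring_nf
    rw [h0]
    have h1 : ((n : ℝ) + (k : ℝ)) ^ (s - γ) ≤ (n : ℝ) ^ (s - γ) :=
      Real.rpow_le_rpow_of_nonpos (by linarith) (by linarith) (by linarith)
    have h2 : ((n : ℝ) + (k : ℝ)) ^ (-s) ≤ ((k : ℝ) + 1) ^ (-s) :=
      Real.rpow_le_rpow_of_nonpos (by positivity) (by linarith) (by linarith)
    exact mul_le_mul h1 h2 (Real.rpow_nonneg ha.le _) (Real.rpow_nonneg (by positivity) _)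
  calc ∑' k : ℕ, ((n : ℝ) + (k : ℝ)) ^ (-γ)
      ≤ ∑' k : ℕ, (n : ℝ) ^ (s - γ) * (((k : ℝ) + 1) ^ (-s)) :=
        Summable.tsum_le_tsum hpt (summable_shift hγ n) (hsum_s.mul_left _)
    _ = (n : ℝ) ^ (s - γ) * ∑' k : ℕ, ((k : ℝ) + 1) ^ (-s) := tsum_mul_left



lemma coe_zero_eq : (((0:ℝ)) : AddCircle (1:ℝ)) = 0 := by norm_cast

set_option maxHeartbeats 1000000 in
lemma isClosed_E11 (hγ : 1 < γ) : IsClosed (E11 γ) := by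
  have hcont : Continuous ((↑) : ℝ → AddCircle (1:ℝ)) := continuous_quotient_mk'
  have h1 : Tendsto (fun m : ℕ => φγ γ (m + 1) / (2 * Real.pi)) atTop (𝓝 0) := by
    have := ((phi_tendsto hγ).comp (tendsto_add_atTop_nat 1)).div_const (2 * Real.pi)
    simpa using this
  have ht : Tendsto (fun m : ℕ => ((φγ γ (m + 1) / (2 * Real.pi) : ℝ) : AddCircle (1:ℝ)))
      atTop (𝓝 0) := by
    have := (hcont.tendsto 0).comp h1
    simpa [coe_zero_eq, Function.comp_def] using this
  have hE : E11 γ = insert (0 : AddCircle (1:ℝ))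
      (Set.range fun m : ℕ => ((φγ γ (m + 1) / (2 * Real.pi) : ℝ) : AddCircle (1:ℝ))) := by
    ext p
    simp only [E11, Set.mem_union, Set.mem_setOf_eq, Set.mem_singleton_iff, Set.mem_insert_iff,
      Set.mem_range]
    constructor
    · rintro (⟨n, hn, rfl⟩ | h)
      · exact Or.inr ⟨n - 1, by rw [Nat.sub_add_cancel hn]⟩
      · exact Or.inl (by rw [h, coe_zero_eq])
    · rintro (rfl | ⟨m, rfl⟩)
      · exact Or.inr coe_zero_eq.symm
      · exact Or.inl ⟨m + 1, Nat.le_add_left 1 m, rfl⟩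
  rw [hE]
  exact ht.isCompact_insert_range.isClosed

lemma zero_mem_E11 : (0 : AddCircle (1:ℝ)) ∈ E11 γ := Or.inr coe_zero_eq.symm

lemma pt_mem_E11 {n : ℕ} (hn : 1 ≤ n) :
    ((φγ γ n / (2 * Real.pi) : ℝ) : AddCircle (1:ℝ)) ∈ E11 γ := Or.inl ⟨n, hn, rfl⟩

lemma norm_pt (hγ : 1 < γ) {n : ℕ} (hn : 1 ≤ n) :
    ‖((φγ γ n / (2 * Real.pi) : ℝ) : AddCircle (1:ℝ))‖ = φγ γ n / (2 * Real.pi) := by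
  have hπ : (3:ℝ) < Real.pi := Real.pi_gt_three
  have h0 : 0 ≤ φγ γ n / (2 * Real.pi) := by
    have := phi_nonneg hγ n; positivity
  have h1 : φγ γ n / (2 * Real.pi) ≤ 1 / 2 := by
    have := phi_le_one hγ n
    rw [div_le_div_iff₀ (by linarith) (by norm_num)]
    nlinarith
  rw [(AddCircle.norm_coe_eq_abs_iff 1 (by norm_num)).2 (by rw [abs_of_nonneg h0]; simpa using h1),
    abs_of_nonneg h0]

lemma thickening_subset (hγ : 1 < γ) {x : ℝ} (hx : 0 < x) {N : ℕ} (hN : 1 ≤ N) :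
    thickening x (E11 γ) ⊆
      ball (0 : AddCircle (1:ℝ)) (φγ γ N / (2 * Real.pi) + x) ∪
        ⋃ n ∈ Finset.Icc 1 N, ball ((φγ γ n / (2 * Real.pi) : ℝ) : AddCircle (1:ℝ)) x := by
  have hπ : (3:ℝ) < Real.pi := Real.pi_gt_three
  intro p hp
  rcases Metric.mem_thickening_iff.1 hp with ⟨z, hz, hd⟩
  rcases hz with ⟨n, hn, rfl⟩ | hz0
  · rcases le_or_gt n N with hnN | hNn
    · refine Or.inr ?_
      exact Set.mem_biUnion (Finset.mem_Icc.2 ⟨hn, hnN⟩) (mem_ball.2 hd)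
    · refine Or.inl (mem_ball.2 ?_)
      have hznorm : dist ((φγ γ n / (2 * Real.pi) : ℝ) : AddCircle (1:ℝ)) (0 : AddCircle (1:ℝ))
          = φγ γ n / (2 * Real.pi) := by
        rw [dist_zero_right, norm_pt hγ hn]
      have htri := dist_triangle p ((φγ γ n / (2 * Real.pi) : ℝ) : AddCircle (1:ℝ)) 0
      have hmono : φγ γ n / (2 * Real.pi) ≤ φγ γ N / (2 * Real.pi) := by
        have := phi_anti hγ hNn.le
        have h2 : (0:ℝ) < 2 * Real.pi := by linarith
        exact (div_le_div_iff_of_pos_right h2).2 this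
      linarith [htri, hznorm]
  · refine Or.inl (mem_ball.2 ?_)
    rw [Set.mem_singleton_iff] at hz0
    subst hz0
    rw [coe_zero_eq] at hd
    have h0 : 0 ≤ φγ γ N / (2 * Real.pi) := by
      have := phi_nonneg hγ N; positivity
    linarith

lemma nbd_le (hγ : 1 < γ) {x : ℝ} (hx : 0 < x) {N : ℕ} (hN : 1 ≤ N) :
    nbd (E11 γ) x ≤ 2 * (φγ γ N / (2 * Real.pi) + x) + (N : ℝ) * (2 * x) := by
  have hπ : (3:ℝ) < Real.pi := Real.pi_gt_three
  have hL0 : 0 ≤ φγ γ N / (2 * Real.pi) := by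
    have := phi_nonneg hγ N; positivity
  have hsub := thickening_subset hγ hx hN
  have hA : volume (ball (0 : AddCircle (1:ℝ)) (φγ γ N / (2 * Real.pi) + x))
      ≤ ENNReal.ofReal (2 * (φγ γ N / (2 * Real.pi) + x)) := by
    refine (measure_mono ball_subset_closedBall).trans ?_
    rw [AddCircle.volume_closedBall]
    exact ENNReal.ofReal_le_ofReal (by simpa using min_le_right 1 (2 * (φγ γ N / (2 * Real.pi) + x)))
  have hB : volume (⋃ n ∈ Finset.Icc 1 N,
        ball ((φγ γ n / (2 * Real.pi) : ℝ) : AddCircle (1:ℝ)) x)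
      ≤ (N : ℝ≥0∞) * ENNReal.ofReal (2 * x) := by
    refine (measure_biUnion_finset_le _ _).trans ?_
    have hball : ∀ n ∈ Finset.Icc 1 N,
        volume (ball ((φγ γ n / (2 * Real.pi) : ℝ) : AddCircle (1:ℝ)) x)
          ≤ ENNReal.ofReal (2 * x) := by
      intro n _
      refine (measure_mono ball_subset_closedBall).trans ?_
      rw [AddCircle.volume_closedBall]
      exact ENNReal.ofReal_le_ofReal (by simpa using min_le_right 1 (2 * x))
    calc ∑ n ∈ Finset.Icc 1 N, volume (ball ((φγ γ n / (2 * Real.pi) : ℝ) : AddCircle (1:ℝ)) x)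
        ≤ ∑ _n ∈ Finset.Icc 1 N, ENNReal.ofReal (2 * x) := Finset.sum_le_sum hball
      _ = (N : ℝ≥0∞) * ENNReal.ofReal (2 * x) := by
          rw [Finset.sum_const, Nat.card_Icc]
          simp [nsmul_eq_mul]
  have hvol : volume (thickening x (E11 γ))
      ≤ ENNReal.ofReal (2 * (φγ γ N / (2 * Real.pi) + x) + (N : ℝ) * (2 * x)) := by
    calc volume (thickening x (E11 γ)) ≤ _ := measure_mono hsub
      _ ≤ _ := measure_union_le _ _
      _ ≤ ENNReal.ofReal (2 * (φγ γ N / (2 * Real.pi) + x)) + (N : ℝ≥0∞) * ENNReal.ofReal (2 * x) :=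
          add_le_add hA hB
      _ = ENNReal.ofReal (2 * (φγ γ N / (2 * Real.pi) + x) + (N : ℝ) * (2 * x)) := by
          rw [ENNReal.ofReal_add (by positivity) (by positivity),
            ENNReal.ofReal_mul (by positivity : (0:ℝ) ≤ (N:ℝ)), ENNReal.ofReal_natCast]
  exact ENNReal.toReal_le_of_le_ofReal (by positivity) hvol

lemma nbd_nonneg (E : Set (AddCircle (1:ℝ))) (x : ℝ) : 0 ≤ nbd E x := ENNReal.toReal_nonneg

lemma nbd_le_one (E : Set (AddCircle (1:ℝ))) (x : ℝ) : nbd E x ≤ 1 := by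
  refine ENNReal.toReal_le_of_le_ofReal zero_le_one ?_
  have h := measure_mono (μ := (volume : Measure (AddCircle (1:ℝ)))) (subset_univ (thickening x E))
  rwa [AddCircle.measure_univ] at h

lemma isBigO_ub (hγ : 1 < γ) {β : ℝ} (hβ : β < 1 - 1 / γ) :
    (fun x => nbd (E11 γ) x) =O[𝓝[>] (0:ℝ)] fun x => x ^ β := by
  have hγ0 : (0:ℝ) < γ := by linarith
  rcases le_or_gt β 0 with hβ0 | hβ0
  · refine Asymptotics.isBigO_iff.2 ⟨1, ?_⟩
    filter_upwards [Ioo_mem_nhdsGT_of_mem (left_mem_Ico.2 one_pos)] with x hx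
    have hx0 : 0 < x := hx.1
    have h1 : (1:ℝ) ≤ x ^ β := by
      have := Real.rpow_le_rpow_of_exponent_ge hx0 hx.2.le hβ0
      rwa [Real.rpow_zero] at this
    rw [Real.norm_eq_abs, Real.norm_eq_abs, abs_of_nonneg (nbd_nonneg _ _),
      abs_of_nonneg (by positivity : (0:ℝ) ≤ x ^ β), one_mul]
    exact (nbd_le_one _ _).trans h1
  · set s : ℝ := γ * (1 - β) with hs
    have hs1 : 1 < s := by
      rw [hs]
      have h1 : 1 / γ < 1 - β := by linarith
      rw [div_lt_iff₀ hγ0] at h1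
      nlinarith
    have hsγ : s ≤ γ := by rw [hs]; nlinarith
    set Z : ℝ := ∑' k : ℕ, ((k : ℝ) + 1) ^ (-s) with hZdef
    have hZ0 : 0 ≤ Z := tsum_nonneg fun i => Real.rpow_nonneg (by positivity) _
    have hπ : (3:ℝ) < Real.pi := Real.pi_gt_three
    refine Asymptotics.isBigO_iff.2 ⟨cγ γ * Z / Real.pi + 6, ?_⟩
    filter_upwards [Ioo_mem_nhdsGT_of_mem (left_mem_Ico.2 one_pos)] with x hx
    have hx0 : 0 < x := hx.1
    have hx1 : x < 1 := hx.2
    set N : ℕ := ⌈x ^ (-(1/γ))⌉₊ with hNdef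
    have hxr : (1:ℝ) ≤ x ^ (-(1/γ)) := by
      have h := Real.rpow_le_rpow_of_exponent_ge hx0 hx1.le
        (neg_nonpos.2 (by positivity) : -(1/γ) ≤ 0)
      rwa [Real.rpow_zero] at h
    have hxrpos : (0:ℝ) < x ^ (-(1/γ)) := lt_of_lt_of_le one_pos hxr
    have hN1 : 1 ≤ N := Nat.one_le_iff_ne_zero.2 (Nat.ceil_pos.2 hxrpos).ne'
    have hNge : x ^ (-(1/γ)) ≤ (N:ℝ) := Nat.le_ceil _
    have hNle : (N:ℝ) ≤ 2 * x ^ (-(1/γ)) := by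
      have := Nat.ceil_lt_add_one hxrpos.le
      rw [← hNdef] at this
      linarith
    have hub := nbd_le hγ hx0 hN1
    have htail := tail_upper hγ hs1 hsγ hN1
    have hφN : φγ γ N ≤ cγ γ * ((N:ℝ) ^ (s - γ) * Z) := by
      rw [φγ]
      exact mul_le_mul_of_nonneg_left htail (c_pos hγ).le
    have hNs : (N:ℝ) ^ (s - γ) ≤ x ^ β := by
      have h1 : (N:ℝ) ^ (s - γ) ≤ (x ^ (-(1/γ))) ^ (s - γ) :=
        Real.rpow_le_rpow_of_nonpos hxrpos hNge (by linarith)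
      have h2 : (x ^ (-(1/γ))) ^ (s - γ) = x ^ β := by
        rw [← Real.rpow_mul hx0.le]
        congr 1
        rw [hs]
        field_simp
        ring
      rwa [h2] at h1
    have hx_le : x ≤ x ^ β := by
      have h := Real.rpow_le_rpow_of_exponent_ge hx0 hx1.le
        (by linarith [one_div_pos.2 hγ0] : β ≤ 1)
      rwa [Real.rpow_one] at h
    have hx2 : x ^ (1 - 1/γ) ≤ x ^ β := Real.rpow_le_rpow_of_exponent_ge hx0 hx1.le hβ.le
    have hNx : (N:ℝ) * (2*x) ≤ 4 * x ^ β := by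
      have h2 : x ^ (-(1/γ)) * x = x ^ (1 - 1/γ) := by
        rw [show (1 - 1/γ : ℝ) = -(1/γ) + 1 by ring, Real.rpow_add hx0, Real.rpow_one]
      nlinarith
    have hπ2 : (0:ℝ) < 2 * Real.pi := by linarith
    have e1 : φγ γ N / (2*Real.pi) ≤ cγ γ * Z / Real.pi / 2 * x ^ β := by
      have h3 : cγ γ * ((N:ℝ) ^ (s - γ) * Z) ≤ cγ γ * (x ^ β * Z) :=
        mul_le_mul_of_nonneg_left (mul_le_mul_of_nonneg_right hNs hZ0) (c_pos hγ).le
      have h4 := hφN.trans h3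
      calc φγ γ N / (2*Real.pi) ≤ (cγ γ * (x ^ β * Z)) / (2*Real.pi) :=
            (div_le_div_iff_of_pos_right hπ2).2 h4
        _ = cγ γ * Z / Real.pi / 2 * x ^ β := by
            field_simp
    have hC : nbd (E11 γ) x ≤ (cγ γ * Z / Real.pi + 6) * x ^ β := by nlinarith
    rw [Real.norm_eq_abs, Real.norm_eq_abs, abs_of_nonneg (nbd_nonneg _ _),
      abs_of_nonneg (by positivity : (0:ℝ) ≤ x ^ β)]
    exact hC

set_option maxHeartbeats 2000000 in
lemma nbd_lb (hγ : 1 < γ) :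
    ∃ c > (0:ℝ), ∀ᶠ x in 𝓝[>] (0:ℝ), c * x ^ (1 - 1/γ) ≤ nbd (E11 γ) x := by
  have hγ0 : (0:ℝ) < γ := by linarith
  have hπ : (3:ℝ) < Real.pi := Real.pi_gt_three
  have hπ0 : (0:ℝ) < Real.pi := by linarith
  have hπ2 : (0:ℝ) < 2 * Real.pi := by linarith
  have hc0 : 0 < cγ γ := c_pos hγ
  set e : ℝ := (1/γ) * (1 - γ) with he
  set c : ℝ := cγ γ / (2*Real.pi) * (2:ℝ)^(-γ) * ((2:ℝ)^(1-γ) * (cγ γ / Real.pi) ^ e) with hc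
  have hp1 : (0:ℝ) < (cγ γ / Real.pi) ^ e := Real.rpow_pos_of_pos (by positivity) e
  have hp2 : (0:ℝ) < (2:ℝ)^(-γ) := Real.rpow_pos_of_pos (by norm_num) _
  have hp3 : (0:ℝ) < (2:ℝ)^(1-γ) := Real.rpow_pos_of_pos (by norm_num) _
  have hcpos : 0 < c := by rw [hc]; positivity
  refine ⟨c, hcpos, ?_⟩
  have hx₀ : (0:ℝ) < min 1 (cγ γ / Real.pi) := by positivity
  filter_upwards [Ioo_mem_nhdsGT_of_mem (left_mem_Ico.2 hx₀)] with x hx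
  have hx0 : 0 < x := hx.1
  have hx1 : x ≤ 1 := le_of_lt (lt_of_lt_of_le hx.2 (min_le_left _ _))
  have hxc : x ≤ cγ γ / Real.pi := le_of_lt (lt_of_lt_of_le hx.2 (min_le_right _ _))
  set B : ℝ := (cγ γ / (Real.pi * x)) ^ (1/γ) with hB
  have hbase1 : (1:ℝ) ≤ cγ γ / (Real.pi * x) := by
    rw [le_div_iff₀ (by positivity)]
    rw [le_div_iff₀ hπ0] at hxc
    nlinarith
  have hB1 : (1:ℝ) ≤ B := by
    rw [hB]
    calc (1:ℝ) = (1:ℝ) ^ (1/γ) := (Real.one_rpow _).symm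
      _ ≤ _ := Real.rpow_le_rpow zero_le_one hbase1 (by positivity)
  have hBpos : 0 < B := lt_of_lt_of_le one_pos hB1
  set N : ℕ := ⌈B⌉₊ with hN
  have hN1 : 1 ≤ N := Nat.ceil_pos.2 hBpos
  have hNR : (1:ℝ) ≤ (N:ℝ) := by exact_mod_cast hN1
  have hNpos : (0:ℝ) < (N:ℝ) := by linarith
  have hNge : B ≤ (N:ℝ) := Nat.le_ceil _
  have hNle : (N:ℝ) ≤ 2 * B := by
    have h := Nat.ceil_lt_add_one hBpos.le
    rw [← hN] at h
    linarith
  have key1 : cγ γ * (N:ℝ) ^ (-γ) ≤ Real.pi * x := by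
    have h1 : B ^ γ ≤ (N:ℝ) ^ γ := Real.rpow_le_rpow hBpos.le hNge hγ0.le
    have h2 : B ^ γ = cγ γ / (Real.pi * x) := by
      rw [hB, ← Real.rpow_mul (by positivity), one_div, inv_mul_cancel₀ hγ0.ne', Real.rpow_one]
    have h3 : cγ γ / (Real.pi * x) ≤ (N:ℝ) ^ γ := h2 ▸ h1
    have h4 : (0:ℝ) < (N:ℝ) ^ γ := Real.rpow_pos_of_pos hNpos γ
    rw [div_le_iff₀ (by positivity)] at h3
    rw [Real.rpow_neg hNpos.le, mul_inv_le_iff₀ h4]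
    linarith
  set L : ℝ := φγ γ N / (2*Real.pi) with hL
  have hφpos : 0 < φγ γ N := phi_pos hγ hN1
  have hLpos : 0 < L := by rw [hL]; positivity
  have hL12 : L ≤ 1/2 := by
    have h := phi_le_one hγ N
    rw [hL, div_le_iff₀ hπ2]
    nlinarith
  have hsubset : closedBall (((L/2 : ℝ)) : AddCircle (1:ℝ)) (L/2) ⊆ thickening x (E11 γ) := by
    intro p hp
    obtain ⟨t, rfl⟩ := QuotientAddGroup.mk_surjective p
    have hdist : dist ((t : ℝ) : AddCircle (1:ℝ)) (((L/2 : ℝ)) : AddCircle (1:ℝ)) ≤ L/2 :=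
      mem_closedBall.1 hp
    set n : ℤ := round (t - L/2) with hn
    set u : ℝ := t - n with hu
    have hsub : ((t : ℝ) : AddCircle (1:ℝ)) - ((L/2 : ℝ) : AddCircle (1:ℝ))
        = (((t - L/2 : ℝ)) : AddCircle (1:ℝ)) := by norm_cast
    have hval : dist ((t : ℝ) : AddCircle (1:ℝ)) (((L/2 : ℝ)) : AddCircle (1:ℝ))
        = |t - L/2 - (n : ℝ)| := by
      rw [dist_eq_norm, hsub, AddCircle.norm_eq, hn]
      norm_num
    have hn0 : (((n : ℝ)) : AddCircle (1:ℝ)) = 0 := by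
      rw [show ((n:ℝ) : AddCircle (1:ℝ)) = QuotientAddGroup.mk (n:ℝ) from rfl,
        QuotientAddGroup.eq_zero_iff]
      exact ⟨n, by simp⟩
    have hu_eq : ((u : ℝ) : AddCircle (1:ℝ)) = ((t : ℝ) : AddCircle (1:ℝ)) := by
      have h1 : ((u : ℝ) : AddCircle (1:ℝ))
          = ((t : ℝ) : AddCircle (1:ℝ)) - (((n:ℝ)) : AddCircle (1:ℝ)) := by
        rw [hu]; norm_cast
      rw [h1, hn0, sub_zero]
    have humem : |u - L/2| ≤ L/2 := by
      have h1 : u - L/2 = t - L/2 - (n : ℝ) := by rw [hu]; ring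
      rw [h1, ← hval]
      exact hdist
    have hu0 : 0 ≤ u := by
      have := abs_le.1 humem
      linarith [this.1]
    have huL : u ≤ L := by
      have := abs_le.1 humem
      linarith [this.2]
    rcases eq_or_lt_of_le hu0 with h0 | hupos
    · have : ((t : ℝ) : AddCircle (1:ℝ)) = 0 := by
        rw [← hu_eq, ← h0, coe_zero_eq]
      rw [this]
      exact self_subset_thickening hx0 _ zero_mem_E11
    · have hev : ∀ᶠ m in atTop, φγ γ m < 2*Real.pi*u :=
        (phi_tendsto hγ).eventually (gt_mem_nhds (by positivity))
      obtain ⟨m₀, hm₀⟩ := eventually_atTop.1 hev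
      have hPex : ∃ j : ℕ, φγ γ (N + j) < 2*Real.pi*u := ⟨m₀, hm₀ _ (Nat.le_add_left m₀ N)⟩
      have hkspec : φγ γ (N + Nat.find hPex) < 2*Real.pi*u := Nat.find_spec hPex
      have hk0 : Nat.find hPex ≠ 0 := by
        intro h0'
        rw [h0', Nat.add_zero] at hkspec
        have h5 : 2*Real.pi*u ≤ φγ γ N := by
          rw [hL, le_div_iff₀ hπ2] at huL
          nlinarith
        linarith
      obtain ⟨k', hk'⟩ := Nat.exists_eq_succ_of_ne_zero hk0
      have hmin : 2*Real.pi*u ≤ φγ γ (N + k') := by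
        have h6 := Nat.find_min hPex (show k' < Nat.find hPex by omega)
        linarith [not_lt.1 h6]
      set m : ℕ := N + k' with hm
      have hkspec2 : φγ γ (m + 1) < 2*Real.pi*u := by
        have h7 : N + Nat.find hPex = m + 1 := by omega
        rwa [h7] at hkspec
      have hgap : φγ γ m - φγ γ (m+1) = cγ γ * (m:ℝ)^(-γ) := by
        have := phi_step hγ m
        linarith
      have hmono : ((m:ℝ))^(-γ) ≤ ((N:ℝ))^(-γ) :=
        Real.rpow_le_rpow_of_nonpos hNpos (Nat.cast_le.mpr (Nat.le_add_right N k'))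
          (neg_nonpos.2 hγ0.le)
      have hgap2 : φγ γ m - φγ γ (m+1) ≤ Real.pi * x := by
        rw [hgap]
        calc cγ γ * (m:ℝ)^(-γ) ≤ cγ γ * (N:ℝ)^(-γ) :=
              mul_le_mul_of_nonneg_left hmono hc0.le
          _ ≤ Real.pi * x := key1
      set v : ℝ := φγ γ (m+1) / (2*Real.pi) with hv
      have hvu : v < u := by
        rw [hv, div_lt_iff₀ hπ2]
        nlinarith
      have h5 : u ≤ φγ γ m / (2*Real.pi) := by
        rw [le_div_iff₀ hπ2]
        nlinarith
      have huv : u - v ≤ x/2 := by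
        rw [le_div_iff₀ hπ2] at h5
        have hv2 : v * (2*Real.pi) = φγ γ (m+1) := by rw [hv]; field_simp
        nlinarith [hgap2, h5, hv2, hπ0]
      have hdist2 : dist ((u:ℝ) : AddCircle (1:ℝ)) (((v:ℝ)) : AddCircle (1:ℝ)) < x := by
        have hsub2 : ((u : ℝ) : AddCircle (1:ℝ)) - ((v : ℝ) : AddCircle (1:ℝ))
            = (((u - v : ℝ)) : AddCircle (1:ℝ)) := by norm_cast
        have habs : |u - v| ≤ 1/2 := by
          rw [abs_of_nonneg (by linarith : (0:ℝ) ≤ u - v)]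
          linarith
        have hne := (AddCircle.norm_coe_eq_abs_iff (p := 1) (x := u - v) (by norm_num)).2
          (by simpa using habs)
        rw [dist_eq_norm, hsub2, hne, abs_of_nonneg (by linarith : (0:ℝ) ≤ u - v)]
        linarith
      refine Metric.mem_thickening_iff.2 ⟨((v:ℝ) : AddCircle (1:ℝ)), ?_, ?_⟩
      · rw [hv]
        exact pt_mem_E11 (Nat.le_add_left 1 m)
      · rw [← hu_eq]
        exact hdist2
  have hvol : ENNReal.ofReal L ≤ volume (thickening x (E11 γ)) := by
    have h1 := measure_mono (μ := (volume : Measure (AddCircle (1:ℝ)))) hsubset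
    rw [AddCircle.volume_closedBall] at h1
    have h2 : (1:ℝ) ⊓ (2*(L/2)) = L := by
      rw [show 2*(L/2) = L by ring]
      exact min_eq_right (by linarith)
    rwa [h2] at h1
  have hnbd : L ≤ nbd (E11 γ) x := by
    have hne : volume (thickening x (E11 γ)) ≠ ⊤ := measure_ne_top _ _
    have h3 := ENNReal.toReal_mono hne hvol
    rwa [ENNReal.toReal_ofReal hLpos.le] at h3
  have ht1 : (N:ℝ) * (2*(N:ℝ))^(-γ) ≤ ∑' k : ℕ, ((N:ℝ)+(k:ℝ))^(-γ) := tail_lower hγ hN1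
  have hL_ge : cγ γ / (2*Real.pi) * ((N:ℝ) * (2*(N:ℝ))^(-γ)) ≤ L := by
    have h1 : cγ γ * ((N:ℝ) * (2*(N:ℝ))^(-γ)) ≤ cγ γ * ∑' k : ℕ, ((N:ℝ)+(k:ℝ))^(-γ) :=
      mul_le_mul_of_nonneg_left ht1 hc0.le
    have h2 : L = cγ γ * (∑' k : ℕ, ((N:ℝ)+(k:ℝ))^(-γ)) / (2*Real.pi) := by rw [hL, φγ]
    calc cγ γ / (2*Real.pi) * ((N:ℝ) * (2*(N:ℝ))^(-γ))
        = cγ γ * ((N:ℝ) * (2*(N:ℝ))^(-γ)) / (2*Real.pi) := by ring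
      _ ≤ cγ γ * (∑' k : ℕ, ((N:ℝ)+(k:ℝ))^(-γ)) / (2*Real.pi) := (div_le_div_iff_of_pos_right hπ2).2 h1
      _ = L := h2.symm
  have hsplit : (N:ℝ) * (2*(N:ℝ))^(-γ) = (2:ℝ)^(-γ) * (N:ℝ)^(1-γ) := by
    rw [Real.mul_rpow (by norm_num) hNpos.le,
      show (1-γ:ℝ) = 1 + (-γ) by ring, Real.rpow_add hNpos, Real.rpow_one]
    ring
  have hxne : x ≠ 0 := hx0.ne'
  have hπne : Real.pi ≠ 0 := hπ0.ne'
  have hB1γ : B ^ (1-γ) = (cγ γ / Real.pi) ^ e * x ^ (1 - 1/γ) := by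
    rw [hB, ← Real.rpow_mul (by positivity), ← he,
      show cγ γ / (Real.pi * x) = (cγ γ / Real.pi) * x⁻¹ by field_simp,
      Real.mul_rpow (by positivity) (by positivity), Real.inv_rpow hx0.le,
      ← Real.rpow_neg hx0.le]
    congr 1
    rw [he]
    field_simp
    congr 1
    ring
  have h2B' : (2*B)^(1-γ) = (2:ℝ)^(1-γ) * B^(1-γ) := Real.mul_rpow (by norm_num) hBpos.le
  have hNB : (2*B)^(1-γ) ≤ (N:ℝ)^(1-γ) :=
    Real.rpow_le_rpow_of_nonpos hNpos hNle (by linarith)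
  calc c * x ^ (1 - 1/γ)
      = cγ γ/(2*Real.pi) * ((2:ℝ)^(-γ) * ((2:ℝ)^(1-γ) * ((cγ γ/Real.pi)^e * x^(1-1/γ)))) := by
        rw [hc]; ring
    _ = cγ γ/(2*Real.pi) * ((2:ℝ)^(-γ) * ((2*B)^(1-γ))) := by rw [h2B', hB1γ]
    _ ≤ cγ γ/(2*Real.pi) * ((2:ℝ)^(-γ) * (N:ℝ)^(1-γ)) := by
        apply mul_le_mul_of_nonneg_left (mul_le_mul_of_nonneg_left hNB hp2.le) (by positivity)
    _ = cγ γ/(2*Real.pi) * ((N:ℝ) * (2*(N:ℝ))^(-γ)) := by rw [hsplit]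
    _ ≤ L := hL_ge
    _ ≤ nbd (E11 γ) x := hnbd

end Stmt11Aux

theorem stmt11 (γ : ℝ) (hγ : 1 < γ) :
    IsClosed (E11 γ) ∧ ACtype (E11 γ) = 1 - 1 / γ := by
  refine ⟨Stmt11Aux.isClosed_E11 hγ, ?_⟩
  have hγ0 : (0:ℝ) < γ := by linarith
  obtain ⟨c, hc0, hev⟩ := Stmt11Aux.nbd_lb hγ
  rw [ACtype]
  set b₀ : ℝ := 1 - 1/γ with hb
  set S := {β : ℝ | (fun x => nbd (E11 γ) x) =O[𝓝[>] (0:ℝ)] fun x => x ^ β} with hS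
  have hub : ∀ β ∈ S, β ≤ b₀ := by
    intro β hβ
    by_contra hcon
    push_neg at hcon
    obtain ⟨C, hC⟩ := Asymptotics.isBigO_iff.1 hβ
    have hδ : 0 < β - b₀ := by linarith
    have htend : Tendsto (fun x : ℝ => C * x ^ (β - b₀)) (𝓝[>] (0:ℝ)) (𝓝 0) := by
      have h1 : ContinuousAt (fun x : ℝ => x ^ (β - b₀)) 0 :=
        Real.continuousAt_rpow_const 0 _ (Or.inr hδ.le)
      have h2 : Tendsto (fun x : ℝ => x ^ (β - b₀)) (𝓝[>] (0:ℝ)) (𝓝 0) := by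
        have h3 := h1.tendsto
        rw [Real.zero_rpow hδ.ne'] at h3
        exact h3.mono_left nhdsWithin_le_nhds
      simpa using h2.const_mul C
    have hev2 : ∀ᶠ x in 𝓝[>] (0:ℝ), c ≤ C * x ^ (β - b₀) := by
      filter_upwards [hC, hev, self_mem_nhdsWithin] with x h1 h2 h3
      have hx0 : (0:ℝ) < x := h3
      have hb0pos : (0:ℝ) < x ^ b₀ := Real.rpow_pos_of_pos hx0 _
      have h4 : nbd (E11 γ) x ≤ C * x ^ β := by
        rw [Real.norm_eq_abs, Real.norm_eq_abs, abs_of_nonneg (Stmt11Aux.nbd_nonneg _ _),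
          abs_of_nonneg (Real.rpow_nonneg hx0.le _)] at h1
        exact h1
      have h5 : c * x ^ b₀ ≤ C * x ^ β := le_trans h2 h4
      have h6 : x ^ β = x ^ (β - b₀) * x ^ b₀ := by
        rw [← Real.rpow_add hx0]
        congr 1
        ring
      rw [h6] at h5
      exact (mul_le_mul_iff_of_pos_right hb0pos).1
        (by linarith [h5] : c * x ^ b₀ ≤ (C * x ^ (β - b₀)) * x ^ b₀)
    have : c ≤ 0 := ge_of_tendsto htend hev2
    linarith
  have hmemlt : ∀ β : ℝ, β < b₀ → β ∈ S := fun β h => Stmt11Aux.isBigO_ub hγ h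
  apply le_antisymm
  · exact csSup_le ⟨b₀ - 1, hmemlt _ (by linarith)⟩ hub
  · have hbdd : BddAbove S := ⟨b₀, hub⟩
    refine le_of_forall_pos_le_add ?_
    intro ε hε
    have h7 : b₀ - ε ∈ S := hmemlt _ (by linarith)
    have h8 := le_csSup hbdd h7
    linarith
end

section
/- Let E be a closed subset of the unit circle, t ∈ T, 0 < ξ < 1, and L_ξ(t) = D ∩ B(t,ξ) the lune at t. Let E^ξ := E ∩ closure(L_ξ(t)). Then d(z, E) ≍ d(z, E^ξ) for z ∈ L_ξ(t); that is, there exist constants 0 < c ≤ 1 such that c·d(z,E^ξ) ≤ d(z,E) ≤ d(z,E^ξ) for all z in the lune (assuming E^ξ is nonempty). -/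
open Metric Set

lemma real_key (a b m α β r Q : ℝ) (h1 : α^2 + β^2 = 1) (h2 : 2*a + r^2 ≤ 0)
    (h3 : 2*b + r^2 ≤ 0) (h4 : β*m = (1-α)*a - b) (hQ : Q = -2*a - 2*b - 2*r^2)
    (hr : r^2 = a^2 + m^2) (hr0 : 0 ≤ r) : |β| * r ≤ (3/2)*Q + 3*r^2 := by
  have ha : a ≤ 0 := by nlinarith [sq_nonneg r]
  have hb : b ≤ 0 := by nlinarith [sq_nonneg r]
  have hα : |α| ≤ 1 := abs_le.2 ⟨by nlinarith [sq_nonneg β], by nlinarith [sq_nonneg β]⟩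
  have hβ1 : |β| ≤ 1 := abs_le.2 ⟨by nlinarith [sq_nonneg α], by nlinarith [sq_nonneg α]⟩
  have hα' := abs_le.1 hα
  have hm : |β| * |m| ≤ -2*a - b := by
    rw [← abs_mul, h4]
    rw [abs_le]
    constructor
    · nlinarith
    · nlinarith
  have hram : r ≤ |a| + |m| := by
    nlinarith [sq_abs a, sq_abs m, abs_nonneg a, abs_nonneg m,
      mul_nonneg (abs_nonneg a) (abs_nonneg m)]
  have h6 : |β| * r ≤ |β| * (|a| + |m|) := mul_le_mul_of_nonneg_left hram (abs_nonneg β)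
  have h7 : |β| * |a| ≤ |a| := mul_le_of_le_one_left (abs_nonneg a) hβ1
  have h8 : |a| = -a := abs_of_nonpos ha
  nlinarith [h6, h7, hm]

lemma key_lemma (ξ : ℝ) (hξ0 : 0 < ξ) (hξ1 : ξ ≤ 1) (t v z w : ℂ)
    (ht : ‖t‖ = 1) (hv : ‖v‖ = 1) (hvt : ‖v - t‖ = ξ)
    (hz1 : ‖z‖ ≤ 1) (hzt : ‖z - t‖ ≤ ξ) (hw : ‖w‖ = 1) (hwt : ξ ≤ ‖w - t‖)
    (β : ℝ) (hβ : ((starRingEnd ℂ) v * t).im = β) (hβ0 : β ≠ 0)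
    (hclose : ‖z - v‖ ≤ |β| / 6) :
    ‖z - v‖ ≤ 12 / |β| * ‖z - w‖ := by
  have hsq : ∀ u : ℂ, ‖u‖^2 = u.re^2 + u.im^2 := fun u => by
    rw [Complex.sq_norm, Complex.normSq_apply]; ring
  obtain ⟨a, ha⟩ : ∃ x, ((starRingEnd ℂ) v * (z - v)).re = x := ⟨_, rfl⟩
  obtain ⟨m, hm⟩ : ∃ x, ((starRingEnd ℂ) v * (z - v)).im = x := ⟨_, rfl⟩
  obtain ⟨α, hα⟩ : ∃ x, ((starRingEnd ℂ) v * t).re = x := ⟨_, rfl⟩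
  obtain ⟨b, hb⟩ : ∃ x, ((starRingEnd ℂ) (v - t) * (z - v)).re = x := ⟨_, rfl⟩
  simp only [Complex.mul_re, Complex.mul_im, Complex.conj_re, Complex.conj_im,
    Complex.sub_re, Complex.sub_im] at ha hm hα hb hβ
  have hv2 : v.re^2 + v.im^2 = 1 := by
    have := hsq v; rw [hv] at this; linarith [this]
  have ht2 : t.re^2 + t.im^2 = 1 := by
    have := hsq t; rw [ht] at this; linarith [this]
  have hvt2 : (v.re - t.re)^2 + (v.im - t.im)^2 = ξ^2 := by
    have := hsq (v - t); rw [hvt] at this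
    simp only [Complex.sub_re, Complex.sub_im] at this; linarith [this]
  have hr2 : ‖z - v‖^2 = (z.re - v.re)^2 + (z.im - v.im)^2 := by
    rw [hsq]; simp [Complex.sub_re, Complex.sub_im]
  have F1 : ‖z‖^2 = 1 + 2*a + ‖z - v‖^2 := by
    rw [hsq, hr2, ← ha]; linear_combination hv2
  have F2 : ‖z - t‖^2 = ξ^2 + 2*b + ‖z - v‖^2 := by
    rw [hsq, hr2, ← hb]
    simp only [Complex.sub_re, Complex.sub_im]
    linear_combination hvt2
  have F3 : α^2 + β^2 = 1 := by
    rw [← hα, ← hβ]; linear_combination (t.re^2 + t.im^2) * hv2 + ht2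
  have F4 : β*m = (1-α)*a - b := by
    rw [← hα, ← hβ, ← hm, ← ha, ← hb]
    linear_combination (t.re*(z.re - v.re) + t.im*(z.im - v.im)) * hv2
  have F5 : ‖z - v‖^2 = a^2 + m^2 := by
    rw [hr2, ← ha, ← hm]
    linear_combination (-((z.re - v.re)^2 + (z.im - v.im)^2)) * hv2
  have hz2le : ‖z‖^2 ≤ 1 := by
    have h := mul_le_mul_of_nonneg_left hz1 (norm_nonneg z)
    rw [mul_one] at h
    calc ‖z‖^2 = ‖z‖ * ‖z‖ := by ring
    _ ≤ ‖z‖ := h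
    _ ≤ 1 := hz1
  have hzt2le : ‖z - t‖^2 ≤ ξ^2 := by
    have h := mul_le_mul hzt hzt (norm_nonneg (z - t)) hξ0.le
    calc ‖z - t‖^2 = ‖z - t‖ * ‖z - t‖ := by ring
    _ ≤ ξ * ξ := h
    _ = ξ^2 := by ring
  have hQ : (1 - ‖z‖^2) + (ξ^2 - ‖z - t‖^2) = -2*a - 2*b - 2*‖z - v‖^2 := by
    rw [F1, F2]; ring
  have hmain := real_key a b m α β (‖z - v‖) ((1 - ‖z‖^2) + (ξ^2 - ‖z - t‖^2)) F3
    (by linarith [F1, hz2le]) (by linarith [F2, hzt2le]) F4 hQ F5 (norm_nonneg _)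
  have s1 : 1 - ‖z‖ ≤ ‖z - w‖ := by
    have h := norm_sub_norm_le w z
    rw [norm_sub_rev] at h; rw [hw] at h; linarith
  have s2 : ξ - ‖z - t‖ ≤ ‖z - w‖ := by
    have h := norm_add_le (w - z) (z - t)
    have h2 : w - z + (z - t) = w - t := by ring
    rw [h2] at h
    have h3 : ‖w - z‖ = ‖z - w‖ := norm_sub_rev _ _
    linarith
  have h1 : (0:ℝ) ≤ 1 - ‖z‖ := by linarith
  have h2 : 0 ≤ ξ - ‖z - t‖ := by linarith
  have e : (1 - ‖z‖^2) + (ξ^2 - ‖z - t‖^2)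
      = (1 - ‖z‖)*(1 + ‖z‖) + (ξ - ‖z - t‖)*(ξ + ‖z - t‖) := by ring
  have m1 : (1 - ‖z‖)*(1 + ‖z‖) ≤ (1 - ‖z‖)*2 :=
    mul_le_mul_of_nonneg_left (by linarith [norm_nonneg z]) h1
  have m2 : (ξ - ‖z - t‖)*(ξ + ‖z - t‖) ≤ (ξ - ‖z - t‖)*2 :=
    mul_le_mul_of_nonneg_left (by linarith [norm_nonneg (z - t)]) h2
  have s3 : (1 - ‖z‖^2) + (ξ^2 - ‖z - t‖^2) ≤ 4 * ‖z - w‖ := by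
    rw [e]; linarith [m1, m2, s1, s2]
  have hβpos : 0 < |β| := abs_pos.2 hβ0
  have hrr : ‖z - v‖ * ‖z - v‖ ≤ ‖z - v‖ * (|β|/6) :=
    mul_le_mul_of_nonneg_left hclose (norm_nonneg _)
  have hpow : ‖z - v‖^2 = ‖z - v‖ * ‖z - v‖ := by ring
  rw [div_mul_eq_mul_div, le_div_iff₀ hβpos]
  linarith [hmain, s3, hrr, hpow]

lemma beta_ne (ξ : ℝ) (hξ0 : 0 < ξ) (hξ1 : ξ < 1) (t v : ℂ)
    (ht : ‖t‖ = 1) (hv : ‖v‖ = 1) (hvt : ‖v - t‖ = ξ) :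
    ((starRingEnd ℂ) v * t).im ≠ 0 := by
  intro h0
  have hsq : ∀ u : ℂ, ‖u‖^2 = u.re^2 + u.im^2 := fun u => by
    rw [Complex.sq_norm, Complex.normSq_apply]; ring
  simp only [Complex.mul_im, Complex.conj_re, Complex.conj_im] at h0
  have hv2 : v.re^2 + v.im^2 = 1 := by
    have := hsq v; rw [hv] at this; linarith [this]
  have ht2 : t.re^2 + t.im^2 = 1 := by
    have := hsq t; rw [ht] at this; linarith [this]
  have hvt2 : (v.re - t.re)^2 + (v.im - t.im)^2 = ξ^2 := by
    have := hsq (v - t); rw [hvt] at this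
    simp only [Complex.sub_re, Complex.sub_im] at this; linarith [this]
  have hs : (v.re*t.re + v.im*t.im)^2 = 1 := by
    linear_combination (t.re^2 + t.im^2) * hv2 + ht2
      - (v.re*t.im - v.im*t.re) * h0
  have hfac : (v.re*t.re + v.im*t.im - 1) * (v.re*t.re + v.im*t.im + 1) = 0 := by
    linear_combination hs
  have hξsq : ξ^2 = 2 - 2*(v.re*t.re + v.im*t.im) := by
    linear_combination -hvt2 + hv2 + ht2
  rcases mul_eq_zero.1 hfac with h | h
  · nlinarith [hξ0, hξsq, h, mul_pos hξ0 hξ0]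
  · nlinarith [hξ0, hξ1, hξsq, h, mul_pos hξ0 hξ0]

lemma mem_closure_lune (t : ℂ) (ξ : ℝ) (hξ0 : 0 < ξ) (w : ℂ)
    (hw : ‖w‖ = 1) (hwt : ‖w - t‖ < ξ) :
    w ∈ closure (ball (0 : ℂ) 1 ∩ ball t ξ) := by
  rw [Metric.mem_closure_iff]
  intro ε hε
  set s : ℝ := min (min (ε/2) ((ξ - ‖w - t‖)/2)) (1/2) with hs_def
  have hs0 : 0 < s := by
    apply lt_min (lt_min (by linarith) (by linarith))
    norm_num
  have hs1 : s ≤ 1/2 := min_le_right _ _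
  have hsε : s ≤ ε/2 := (min_le_left _ _).trans (min_le_left _ _)
  have hsξ : s ≤ (ξ - ‖w - t‖)/2 := (min_le_left _ _).trans (min_le_right _ _)
  refine ⟨((1 - s : ℝ) : ℂ) * w, ⟨?_, ?_⟩, ?_⟩
  · rw [mem_ball_zero_iff, norm_mul, hw, mul_one, Complex.norm_real,
      Real.norm_eq_abs, abs_of_pos (by linarith)]
    linarith
  · rw [mem_ball, dist_eq_norm]
    have e : ((1 - s : ℝ) : ℂ) * w - t = (w - t) - (s : ℂ) * w := by
      push_cast; ring
    rw [e]
    calc ‖(w - t) - (s : ℂ) * w‖ ≤ ‖w - t‖ + ‖(s : ℂ) * w‖ := norm_sub_le _ _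
    _ = ‖w - t‖ + s := by
        rw [norm_mul, hw, mul_one, Complex.norm_real, Real.norm_eq_abs,
          abs_of_pos hs0]
    _ < ξ := by linarith
  · rw [dist_eq_norm]
    have e : w - ((1 - s : ℝ) : ℂ) * w = (s : ℂ) * w := by push_cast; ring
    rw [e, norm_mul, hw, mul_one, Complex.norm_real, Real.norm_eq_abs,
      abs_of_pos hs0]
    linarith

/-- Let `E` be a closed subset of the unit circle, `t` on the circle,
`0 < ξ < 1`, and `L_ξ(t) = 𝔻 ∩ B(t,ξ)` the lune at `t`.  Let
`E^ξ = E ∩ closure (L_ξ(t))` and assume it is nonempty.  Then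
`d(z,E) ≍ d(z,E^ξ)` on the lune: there is `0 < c ≤ 1` with
`c · d(z,E^ξ) ≤ d(z,E) ≤ d(z,E^ξ)` for all `z ∈ L_ξ(t)`. -/
theorem stmt18 (E : Set ℂ) (hE : IsClosed E) (hEs : E ⊆ sphere (0 : ℂ) 1)
    (t : ℂ) (ht : t ∈ sphere (0 : ℂ) 1) (ξ : ℝ) (hξ0 : 0 < ξ) (hξ1 : ξ < 1)
    (hne : (E ∩ closure (ball (0 : ℂ) 1 ∩ ball t ξ)).Nonempty) :
    ∃ c : ℝ, 0 < c ∧ c ≤ 1 ∧ ∀ z ∈ ball (0 : ℂ) 1 ∩ ball t ξ,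
      c * infDist z (E ∩ closure (ball (0 : ℂ) 1 ∩ ball t ξ)) ≤ infDist z E ∧
      infDist z E ≤ infDist z (E ∩ closure (ball (0 : ℂ) 1 ∩ ball t ξ)) := by
  have htn : ‖t‖ = 1 := by rwa [mem_sphere_zero_iff_norm] at ht
  set L : Set ℂ := ball (0 : ℂ) 1 ∩ ball t ξ with hL
  set Eξ : Set ℂ := E ∩ closure L with hEξdef
  have hEne : E.Nonempty := hne.imp fun e he => he.1
  have hupper : ∀ z : ℂ, infDist z E ≤ infDist z Eξ := fun z =>
    infDist_le_infDist_of_subset inter_subset_left hne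
  suffices H : ∃ c : ℝ, 0 < c ∧ c ≤ 1 ∧ ∀ z ∈ L, c * infDist z Eξ ≤ infDist z E by
    obtain ⟨c, h0, h1, h2⟩ := H
    exact ⟨c, h0, h1, fun z hz => ⟨h2 z hz, hupper z⟩⟩
  by_contra Hc
  push_neg at Hc
  have Hn : ∀ n : ℕ, ∃ zz, zz ∈ L ∧ infDist zz E < 1/((n:ℝ)+1) * infDist zz Eξ := by
    intro n
    have h1 : (0:ℝ) < 1/((n:ℝ)+1) := by positivity
    have h2 : 1/((n:ℝ)+1) ≤ 1 := by
      rw [div_le_one (by positivity)]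
      simp [Nat.cast_nonneg]
    obtain ⟨zz, hz1, hz2⟩ := Hc (1/((n:ℝ)+1)) h1 h2
    exact ⟨zz, hz1, by linarith⟩
  choose z hzL hzlt using Hn
  have hgpos : ∀ n, 0 < infDist (z n) Eξ := by
    intro n
    rcases lt_or_eq_of_le (infDist_nonneg : 0 ≤ infDist (z n) Eξ) with h | h
    · exact h
    · exfalso
      have := hzlt n
      rw [← h, mul_zero] at this
      exact absurd this (not_lt.2 infDist_nonneg)
  have hfpos : ∀ n, 0 < infDist (z n) E := by
    intro n
    rcases lt_or_eq_of_le (infDist_nonneg : 0 ≤ infDist (z n) E) with h | h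
    · exact h
    · exfalso
      have hzE : z n ∈ E := (hE.mem_iff_infDist_zero hEne).2 h.symm
      have hzEξ : z n ∈ Eξ := ⟨hzE, subset_closure (hzL n)⟩
      exact absurd (infDist_zero_of_mem hzEξ) (ne_of_gt (hgpos n))
  have hfltg : ∀ n, infDist (z n) E < infDist (z n) Eξ := by
    intro n
    have h2 : 1/((n:ℝ)+1) * infDist (z n) Eξ ≤ infDist (z n) Eξ := by
      apply mul_le_of_le_one_left infDist_nonneg
      rw [div_le_one (by positivity)]
      simp [Nat.cast_nonneg]
    exact lt_of_lt_of_le (hzlt n) h2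
  have Hw : ∀ n, ∃ ww ∈ E,
      dist (z n) ww < min (infDist (z n) Eξ) (2 * infDist (z n) E) := by
    intro n
    apply (infDist_lt_iff hEne).1
    exact lt_min (hfltg n) (by linarith [hfpos n])
  choose w hwE hwd using Hw
  have hwnotK : ∀ n, w n ∉ closure L := by
    intro n hmem
    have h1 : infDist (z n) Eξ ≤ dist (z n) (w n) :=
      infDist_le_dist_of_mem ⟨hwE n, hmem⟩
    have h2 := (hwd n).trans_le (min_le_left _ _)
    linarith
  have hwnorm : ∀ n, ‖w n‖ = 1 := fun n => by
    rw [← mem_sphere_zero_iff_norm]; exact hEs (hwE n)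
  have hwtge : ∀ n, ξ ≤ ‖w n - t‖ := by
    intro n
    by_contra hlt
    push_neg at hlt
    exact hwnotK n (mem_closure_lune t ξ hξ0 (w n) (hwnorm n) hlt)
  -- compactness
  have hKsub : closure L ⊆ closedBall (0:ℂ) 1 := by
    refine (closure_mono inter_subset_left).trans ?_
    rw [closure_ball (0:ℂ) one_ne_zero]
  have hKcomp : IsCompact (closure L) :=
    (isCompact_closedBall (0:ℂ) 1).of_isClosed_subset isClosed_closure hKsub
  have hEcomp : IsCompact E :=
    (isCompact_sphere (0:ℂ) 1).of_isClosed_subset hE hEs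
  obtain ⟨v, hvK, φ, hφm, hφlim⟩ :=
    hKcomp.tendsto_subseq (fun n => subset_closure (hzL n))
  obtain ⟨wl, hwlE, ψ, hψm, hψlim⟩ :=
    hEcomp.tendsto_subseq (x := fun n => w (φ n)) (fun n => hwE (φ n))
  set σ : ℕ → ℕ := φ ∘ ψ with hσdef
  have hσm : StrictMono σ := hφm.comp hψm
  have hzlim : Filter.Tendsto (fun n => z (σ n)) Filter.atTop (nhds v) :=
    hφlim.comp hψm.tendsto_atTop
  have hwlim : Filter.Tendsto (fun n => w (σ n)) Filter.atTop (nhds wl) := hψlim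
  -- g is bounded by 2
  obtain ⟨e₀, he₀⟩ := hne
  have he₀n : ‖e₀‖ = 1 := by
    rw [← mem_sphere_zero_iff_norm]; exact hEs he₀.1
  have hgle : ∀ n, infDist (z n) Eξ ≤ 2 := by
    intro n
    refine (infDist_le_dist_of_mem he₀).trans ?_
    rw [dist_eq_norm]
    calc ‖z n - e₀‖ ≤ ‖z n‖ + ‖e₀‖ := norm_sub_le _ _
    _ ≤ 2 := by
        have := mem_ball_zero_iff.1 (hzL n).1
        rw [he₀n]; linarith
  -- infDist v E = 0
  have hf0 : Filter.Tendsto (fun n => infDist (z (σ n)) E) Filter.atTop (nhds 0) := by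
    refine squeeze_zero (g := fun n : ℕ => 2 * (1/((n:ℝ)+1)))
      (fun n => infDist_nonneg) ?_ ?_
    · intro n
      have h1 := (hzlt (σ n)).le
      have h2 : 1/((σ n:ℝ)+1) * infDist (z (σ n)) Eξ ≤ 1/((σ n:ℝ)+1) * 2 :=
        mul_le_mul_of_nonneg_left (hgle (σ n)) (by positivity)
      have h3 : (1:ℝ)/((σ n:ℝ)+1) ≤ 1/((n:ℝ)+1) := by
        apply one_div_le_one_div_of_le (by positivity)
        have := hσm.le_apply (x := n)
        have : ((n:ℝ)) ≤ ((σ n : ℕ):ℝ) := by exact_mod_cast this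
        linarith
      have h4 : 1/((σ n:ℝ)+1) * 2 ≤ 2 * (1/((n:ℝ)+1)) := by linarith
      linarith
    · have := tendsto_one_div_add_atTop_nhds_zero_nat.const_mul (2:ℝ)
      simpa using this
  have hfv : infDist v E = 0 := by
    have h1 : Filter.Tendsto (fun n => infDist (z (σ n)) E) Filter.atTop
        (nhds (infDist v E)) := ((continuous_infDist_pt E).tendsto v).comp hzlim
    exact tendsto_nhds_unique h1 hf0
  have hvE : v ∈ E := (hE.mem_iff_infDist_zero hEne).2 hfv
  have hvEξ : v ∈ Eξ := ⟨hvE, hvK⟩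
  have hgv : infDist v Eξ = 0 := infDist_zero_of_mem hvEξ
  -- wl = v
  have hwlv : wl = v := by
    have h1 : Filter.Tendsto (fun n => dist (z (σ n)) (w (σ n))) Filter.atTop
        (nhds (dist v wl)) := hzlim.dist hwlim
    have h2 : Filter.Tendsto (fun n => infDist (z (σ n)) Eξ) Filter.atTop
        (nhds 0) := by
      have := ((continuous_infDist_pt Eξ).tendsto v).comp hzlim
      rwa [hgv] at this
    have h3 : dist v wl ≤ 0 := le_of_tendsto_of_tendsto' h1 h2
      (fun n => ((hwd (σ n)).trans_le (min_le_left _ _)).le)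
    exact (dist_le_zero.1 h3).symm
  -- v is a vertex
  have hvn : ‖v‖ = 1 := by
    rw [← mem_sphere_zero_iff_norm]; exact hEs hvE
  have hvtge : ξ ≤ ‖v - t‖ := by
    have h1 : Filter.Tendsto (fun n => ‖w (σ n) - t‖) Filter.atTop
        (nhds ‖wl - t‖) := ((hwlim.sub tendsto_const_nhds).norm)
    have h2 := ge_of_tendsto h1 (Filter.Eventually.of_forall fun n => hwtge (σ n))
    rwa [hwlv] at h2
  have hvtle : ‖v - t‖ ≤ ξ := by
    have h1 : v ∈ closedBall t ξ := by
      rw [← closure_ball t (ne_of_gt hξ0)]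
      exact (closure_mono inter_subset_right) hvK
    rw [mem_closedBall, dist_eq_norm] at h1
    exact h1
  have hvt : ‖v - t‖ = ξ := le_antisymm hvtle hvtge
  -- the angle β
  have hβ0 : ((starRingEnd ℂ) v * t).im ≠ 0 := beta_ne ξ hξ0 hξ1 t v htn hvn hvt
  set β : ℝ := ((starRingEnd ℂ) v * t).im with hβdef
  have hβpos : 0 < |β| := abs_pos.2 hβ0
  -- choose a large index
  obtain ⟨N₁, hN₁⟩ := (Metric.tendsto_atTop.1 hzlim) (|β|/6) (by positivity)
  obtain ⟨N₂, hN₂⟩ := exists_nat_ge (24/|β|)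
  set n : ℕ := max N₁ N₂ with hn_def
  set k : ℕ := σ n with hk_def
  have hclose : ‖z k - v‖ ≤ |β|/6 := by
    have := hN₁ n (le_max_left _ _)
    rw [dist_eq_norm] at this
    exact this.le
  have hz1 : ‖z k‖ ≤ 1 := (mem_ball_zero_iff.1 (hzL k).1).le
  have hzt : ‖z k - t‖ ≤ ξ := by
    have := (hzL k).2
    rw [mem_ball, dist_eq_norm] at this
    exact this.le
  have hkey : ‖z k - v‖ ≤ 12/|β| * ‖z k - w k‖ :=
    key_lemma ξ hξ0 hξ1.le t v (z k) (w k) htn hvn hvt hz1 hzt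
      (hwnorm k) (hwtge k) β rfl hβ0 hclose
  -- contradiction
  have e1 : infDist (z k) Eξ ≤ ‖z k - v‖ := by
    have := infDist_le_dist_of_mem hvEξ (x := z k)
    rwa [dist_eq_norm] at this
  have e3 : ‖z k - w k‖ ≤ 2 * infDist (z k) E := by
    rw [← dist_eq_norm]
    exact ((hwd k).trans_le (min_le_right _ _)).le
  have hA : |β| * infDist (z k) Eξ ≤ 24 * infDist (z k) E := by
    have h1 : infDist (z k) Eξ ≤ 12/|β| * (2 * infDist (z k) E) := by
      refine e1.trans (hkey.trans ?_)
      exact mul_le_mul_of_nonneg_left e3 (by positivity)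
    rw [div_mul_eq_mul_div, le_div_iff₀ hβpos] at h1
    linarith
  have hB : ((k:ℝ)+1) * infDist (z k) E < infDist (z k) Eξ := by
    have h1 := hzlt k
    rw [div_mul_eq_mul_div, lt_div_iff₀ (by positivity : (0:ℝ) < (k:ℝ)+1)] at h1
    linarith
  have h24 : 24 ≤ |β| * ((k:ℝ)+1) := by
    have h1 : (N₂:ℝ) ≤ (k:ℝ) := by
      have hh : N₂ ≤ k := le_trans (le_max_right N₁ N₂) (hσm.le_apply)
      exact_mod_cast hh
    have h2 : 24/|β| ≤ (k:ℝ)+1 := by linarith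
    rw [div_le_iff₀ hβpos] at h2
    linarith
  have hf := hfpos k
  have hg := hgpos k
  nlinarith [hA, hB, h24, hf, hg, hβpos,
    mul_le_mul_of_nonneg_right h24 hf.le,
    mul_lt_mul_of_pos_left hB hβpos]
end
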